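/- Let L be a Moufang loop and N its associated 3-net. Let M be the group of collineations generated by the Bol reflections of N, M_0 the direction preserving part of M, and S ≅ S_3 the group generated by the three Bol reflections whose axes contain the origin of N. Then Aut(L) is isomorphic to the centralizer C_{Aut(M_0)}(S) of S in Aut(M_0). -/

import Mathlib

open Matrix
/-- A loop: a quasigroup with two-sided neutral element. -/
class Loop (Q : Type*) extends Mul Q, One Q where
  one_mul : ∀ a : Q, 1 * a = a
  mul_one : ∀ a : Q, a * 1 = a
  mul_left_bijective : ∀ a : Q, Function.Bijective (fun x : Q => a * x)
  mul_right_bijective : ∀ a : Q, Function.Bijective (fun x : Q => x * a)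

namespace Loop

variable {Q : Type*} [Loop Q]

/-- The left translation `L_a : x ↦ a * x` of a loop. -/
noncomputable def L (a : Q) : Equiv.Perm Q :=
  Equiv.ofBijective _ (Loop.mul_left_bijective a)

/-- The right translation `R_a : x ↦ x * a` of a loop. -/
noncomputable def R (a : Q) : Equiv.Perm Q :=
  Equiv.ofBijective _ (Loop.mul_right_bijective a)

@[simp] theorem L_apply (a x : Q) : L a x = a * x := rfl
@[simp] theorem R_apply (a x : Q) : R a x = x * a := rfl

/-- The multiplication group of a loop: the permutation group generated by all
left and right translations. -/
noncomputable def Mlt (Q : Type*) [Loop Q] : Subgroup (Equiv.Perm Q) :=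
  Subgroup.closure (Set.range (L : Q → Equiv.Perm Q) ∪ Set.range (R : Q → Equiv.Perm Q))

/-- The inner mapping group of a loop: the elements of the multiplication group
fixing the neutral element. -/
noncomputable def Inn (Q : Type*) [Loop Q] : Subgroup (Equiv.Perm Q) where
  carrier := {f | f ∈ Mlt Q ∧ f 1 = 1}
  one_mem' := ⟨one_mem _, rfl⟩
  mul_mem' := fun ha hb => ⟨mul_mem ha.1 hb.1, by
    simp only [Equiv.Perm.mul_apply, hb.2, ha.2]⟩
  inv_mem' := fun ha => ⟨inv_mem ha.1, by
    conv_lhs => rw [← ha.2]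
    simp⟩

/-- A subloop: a subset containing the neutral element, closed under
multiplication and under both divisions. -/
structure IsSubloop (Q : Type*) [Loop Q] (S : Set Q) : Prop where
  one_mem : (1 : Q) ∈ S
  mul_mem : ∀ x ∈ S, ∀ y ∈ S, x * y ∈ S
  ldiv_mem : ∀ x ∈ S, ∀ y ∈ S, ∀ z, x * z = y → z ∈ S
  rdiv_mem : ∀ x ∈ S, ∀ y ∈ S, ∀ z, z * x = y → z ∈ S

/-- A normal subloop: a subloop invariant under the inner mapping group. -/
def IsNormalSubloop (Q : Type*) [Loop Q] (S : Set Q) : Prop :=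
  IsSubloop Q S ∧ ∀ φ ∈ Inn Q, ∀ x ∈ S, φ x ∈ S

/-- A loop is simple if its only normal subloops are the trivial one and the
whole loop. -/
def IsSimpleLoop (Q : Type*) [Loop Q] : Prop :=
  ∀ S : Set Q, IsNormalSubloop Q S → S = {1} ∨ S = Set.univ

/-- The subloop generated by a subset. -/
def subloopClosure (Q : Type*) [Loop Q] (s : Set Q) : Set Q :=
  ⋂₀ {T : Set Q | IsSubloop Q T ∧ s ⊆ T}

end Loop

/-- The Moufang identity. -/
def IsMoufang (Q : Type*) [Mul Q] : Prop :=
  ∀ x y z : Q, ((x * y) * x) * z = x * (y * (x * z))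

/-! `3`-nets, collineations, Bol reflections, Moufang `3`-nets. -/

/-- A `3`-net: a point set together with three classes of lines such that distinct
lines of the same class are disjoint, two lines of different classes meet in exactly
one point, and every point lies on exactly one line of each class. -/
structure ThreeNet (P : Type*) where
  lines : Fin 3 → Set (Set P)
  disj : ∀ i, ∀ ℓ ∈ lines i, ∀ ℓ' ∈ lines i, ℓ ≠ ℓ' → ℓ ∩ ℓ' = ∅
  meet : ∀ i j, i ≠ j → ∀ ℓ ∈ lines i, ∀ ℓ' ∈ lines j, ∃! p, p ∈ ℓ ∧ p ∈ ℓ'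
  point_line : ∀ (p : P) (i), ∃! ℓ, ℓ ∈ lines i ∧ p ∈ ℓ

namespace ThreeNet

variable {P : Type*} (N : ThreeNet P)

/-- A subset of the point set is a line if it belongs to one of the three classes. -/
def IsLine (ℓ : Set P) : Prop := ∃ i, ℓ ∈ N.lines i

/-- A collineation: a line preserving bijection of the point set. -/
def IsColl (f : Equiv.Perm P) : Prop :=
  (∀ ℓ, N.IsLine ℓ → N.IsLine (f '' ℓ)) ∧ (∀ ℓ, N.IsLine ℓ → N.IsLine (⇑f⁻¹ '' ℓ))

/-- The group of direction preserving collineations: collineations mapping every line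
class to itself. -/
def dirPres : Subgroup (Equiv.Perm P) where
  carrier := {f | ∀ i, ∀ ℓ ∈ N.lines i, f '' ℓ ∈ N.lines i ∧ ⇑f⁻¹ '' ℓ ∈ N.lines i}
  one_mem' := by
    intro i ℓ hℓ
    refine ⟨?_, ?_⟩ <;> simpa using hℓ
  mul_mem' := by
    intro f g hf hg i ℓ hℓ
    constructor
    · have : ⇑(f * g) '' ℓ = f '' (g '' ℓ) := by
        rw [← Set.image_comp]; rfl
      rw [this]
      exact (hf i _ ((hg i ℓ hℓ).1)).1
    · have : ⇑(f * g)⁻¹ '' ℓ = ⇑g⁻¹ '' (⇑f⁻¹ '' ℓ) := by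
        rw [← Set.image_comp]
        rfl
      rw [this]
      exact (hg i _ ((hf i ℓ hℓ).2)).2
  inv_mem' := by
    intro f hf i ℓ hℓ
    refine ⟨(hf i ℓ hℓ).2, ?_⟩
    have : ⇑f⁻¹⁻¹ '' ℓ = f '' ℓ := by rw [inv_inv]
    rw [this]
    exact (hf i ℓ hℓ).1

/-- The geometric specification of the (would-be) Bol reflection `σ_ℓ` with axis `ℓ`
of class `i`: for every point `p`, with `a_j, a_k` the lines through `p` of the other
two classes, meeting the axis in `q_j` resp. `q_k`, the image of `p` is the
intersection of the `j`-line through `q_k` with the `k`-line through `q_j`. -/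
def BolSpec (i : Fin 3) (ℓ : Set P) (f : P → P) : Prop :=
  ∀ j k : Fin 3, j ≠ i → k ≠ i → j ≠ k →
    ∀ p : P, ∀ aj ∈ N.lines j, ∀ ak ∈ N.lines k, p ∈ aj → p ∈ ak →
      ∀ qj, qj ∈ aj → qj ∈ ℓ → ∀ qk, qk ∈ ak → qk ∈ ℓ →
        ∀ bj ∈ N.lines j, ∀ bk ∈ N.lines k, qk ∈ bj → qj ∈ bk →
          f p ∈ bj ∧ f p ∈ bk

/-- `f` is the Bol reflection with axis `ℓ`: it satisfies the geometric specification
of `σ_ℓ` and is a collineation. -/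
def IsBolRefl (ℓ : Set P) (f : Equiv.Perm P) : Prop :=
  (∃ i, ℓ ∈ N.lines i ∧ N.BolSpec i ℓ f) ∧ N.IsColl f

/-- A `3`-net is Moufang if the map `σ_ℓ` is a (Bol reflection) collineation for every
line `ℓ`. -/
def IsMoufangNet : Prop :=
  ∀ i, ∀ ℓ ∈ N.lines i, ∃ f : Equiv.Perm P, N.BolSpec i ℓ f ∧ N.IsColl f

/-- The group `M` generated by all Bol reflections of the net. -/
def MGroup : Subgroup (Equiv.Perm P) :=
  Subgroup.closure {f | ∃ ℓ, N.IsBolRefl ℓ f}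

/-- The direction preserving part `M₀` of the group generated by all Bol
reflections. -/
def MZero : Subgroup (Equiv.Perm P) := N.MGroup ⊓ N.dirPres

/-- The coordinate loop multiplication of a `3`-net, relationally: given the
"horizontal" coordinate line `ℓ₁` (of class `0`) and the "vertical" line `ℓ₂`
(of class `1`) through the origin, `CoordMul ℓ₁ ℓ₂ x y z` says that the product of the
points `x` and `y` of `ℓ₁` in the coordinate loop is the point `z` of `ℓ₁`. -/
def CoordMul (ℓ₁ ℓ₂ : Set P) (x y z : P) : Prop :=
  ∃ t₁ ∈ N.lines 2, y ∈ t₁ ∧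
    ∃ p, p ∈ t₁ ∧ p ∈ ℓ₂ ∧
      ∃ m ∈ N.lines 0, p ∈ m ∧
        ∃ v ∈ N.lines 1, x ∈ v ∧
          ∃ q, q ∈ m ∧ q ∈ v ∧
            ∃ t₂ ∈ N.lines 2, q ∈ t₂ ∧ z ∈ t₂ ∧ z ∈ ℓ₁

end ThreeNet

/-! The `3`-net associated with a loop. -/

namespace Loop

variable {Q : Type*} [Loop Q]

theorem mul_left_cancel' {a x y : Q} (h : a * x = a * y) : x = y :=
  (Loop.mul_left_bijective a).1 h

theorem mul_right_cancel' {a x y : Q} (h : x * a = y * a) : x = y :=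
  (Loop.mul_right_bijective a).1 h

theorem existsUnique_ldiv (a b : Q) : ∃! x, a * x = b := by
  obtain ⟨x, hx⟩ := (Loop.mul_left_bijective a).2 b
  exact ⟨x, hx, fun y hy => mul_left_cancel' (hy.trans hx.symm)⟩

theorem existsUnique_rdiv (a b : Q) : ∃! x, x * a = b := by
  obtain ⟨x, hx⟩ := (Loop.mul_right_bijective a).2 b
  exact ⟨x, hx, fun y hy => mul_right_cancel' (hy.trans hx.symm)⟩

/-- A horizontal line of the `3`-net associated with a loop. -/
def hline (c : Q) : Set (Q × Q) := {p | p.2 = c}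
/-- A vertical line of the `3`-net associated with a loop. -/
def vline (c : Q) : Set (Q × Q) := {p | p.1 = c}
/-- A transversal line of the `3`-net associated with a loop. -/
def tline (c : Q) : Set (Q × Q) := {p | p.1 * p.2 = c}

theorem hline_inj {c c' : Q} (h : hline c = hline c') : c = c' := by
  have : (1, c) ∈ hline c := rfl
  rw [h] at this
  exact this

theorem vline_inj {c c' : Q} (h : vline c = vline c') : c = c' := by
  have : (c, 1) ∈ vline c := rfl
  rw [h] at this
  exact this

theorem tline_inj {c c' : Q} (h : tline c = tline c') : c = c' := by
  have : (c, 1) ∈ tline c := Loop.mul_one c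
  rw [h] at this
  exact (Loop.mul_one c).symm.trans this

/-- The `3`-net associated with a loop: points are pairs `(x, y) ∈ Q × Q`, with
horizontal lines `{(x, c)}`, vertical lines `{(c, y)}` and transversal lines
`{(x, y) | x·y = c}`. -/
def loopNet (Q : Type*) [Loop Q] : ThreeNet (Q × Q) where
  lines := ![{s | ∃ c : Q, s = hline c}, {s | ∃ c : Q, s = vline c},
    {s | ∃ c : Q, s = tline c}]
  disj := by
    intro i
    fin_cases i <;>
      · rintro ℓ ⟨c, rfl⟩ ℓ' ⟨c', rfl⟩ hne
        ext p
        simp only [Set.mem_inter_iff, Set.mem_empty_iff_false, iff_false, not_and]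
        intro h1 h2
        exact hne (by rw [show c = c' from (h1 : _ = c).symm.trans h2])
  meet := by
    have h01 : ∀ c d : Q, ∃! p : Q × Q, p ∈ hline c ∧ p ∈ vline d := by
      intro c d
      refine ⟨(d, c), ⟨rfl, rfl⟩, ?_⟩
      rintro ⟨x, y⟩ ⟨h1, h2⟩
      simp only [hline, vline, Set.mem_setOf_eq] at h1 h2
      rw [h1, h2]
    have h02 : ∀ c d : Q, ∃! p : Q × Q, p ∈ hline c ∧ p ∈ tline d := by
      intro c d
      obtain ⟨x, hx, hxu⟩ := existsUnique_rdiv c d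
      refine ⟨(x, c), ⟨rfl, hx⟩, ?_⟩
      rintro ⟨u, v⟩ ⟨h1, h2⟩
      simp only [hline, tline, Set.mem_setOf_eq] at h1 h2
      subst h1
      rw [hxu u h2]
    have h12 : ∀ c d : Q, ∃! p : Q × Q, p ∈ vline c ∧ p ∈ tline d := by
      intro c d
      obtain ⟨y, hy, hyu⟩ := existsUnique_ldiv c d
      refine ⟨(c, y), ⟨rfl, hy⟩, ?_⟩
      rintro ⟨u, v⟩ ⟨h1, h2⟩
      simp only [vline, tline, Set.mem_setOf_eq] at h1 h2
      subst h1
      rw [hyu v h2]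
    have symm : ∀ (A B : Set (Q × Q)), (∃! p : Q × Q, p ∈ A ∧ p ∈ B) →
        ∃! p : Q × Q, p ∈ B ∧ p ∈ A := by
      rintro A B ⟨p, ⟨h1, h2⟩, hu⟩
      exact ⟨p, ⟨h2, h1⟩, fun q ⟨g2, g1⟩ => hu q ⟨g1, g2⟩⟩
    intro i j hij
    fin_cases i <;> fin_cases j
    · exact absurd rfl hij
    · rintro ℓ ⟨c, rfl⟩ ℓ' ⟨c', rfl⟩; exact h01 c c'
    · rintro ℓ ⟨c, rfl⟩ ℓ' ⟨c', rfl⟩; exact h02 c c'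
    · rintro ℓ ⟨c, rfl⟩ ℓ' ⟨c', rfl⟩; exact symm _ _ (h01 c' c)
    · exact absurd rfl hij
    · rintro ℓ ⟨c, rfl⟩ ℓ' ⟨c', rfl⟩; exact h12 c c'
    · rintro ℓ ⟨c, rfl⟩ ℓ' ⟨c', rfl⟩; exact symm _ _ (h02 c' c)
    · rintro ℓ ⟨c, rfl⟩ ℓ' ⟨c', rfl⟩; exact symm _ _ (h12 c' c)
    · exact absurd rfl hij
  point_line := by
    rintro ⟨x, y⟩ i
    fin_cases i
    · refine ⟨hline y, ⟨⟨y, rfl⟩, rfl⟩, ?_⟩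
      rintro ℓ ⟨⟨c, rfl⟩, hc⟩
      rw [show c = y from (hc : _ = c).symm]
    · refine ⟨vline x, ⟨⟨x, rfl⟩, rfl⟩, ?_⟩
      rintro ℓ ⟨⟨c, rfl⟩, hc⟩
      rw [show c = x from (hc : _ = c).symm]
    · refine ⟨tline (x * y), ⟨⟨x * y, rfl⟩, rfl⟩, ?_⟩
      rintro ℓ ⟨⟨c, rfl⟩, hc⟩
      rw [show c = x * y from (hc : _ = c).symm]

/-- The lines of `loopNet Q` through the origin `(1, 1)`. -/
def originLine (Q : Type*) [Loop Q] : Fin 3 → Set (Q × Q) :=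
  ![hline 1, vline 1, tline 1]

end Loop

/-- The automorphism of `M₀` given by conjugation with the Bol reflection `σ i`. -/
def conjAutM0 (Q : Type*) [Loop Q] (σ : Fin 3 → Equiv.Perm (Q × Q))
    (hnorm : ∀ i, ∀ x ∈ (Loop.loopNet Q).MZero,
      (σ i)⁻¹ * x * σ i ∈ (Loop.loopNet Q).MZero ∧
        σ i * x * (σ i)⁻¹ ∈ (Loop.loopNet Q).MZero)
    (i : Fin 3) : MulAut ↥((Loop.loopNet Q).MZero) where
  toFun x := ⟨(σ i)⁻¹ * x.1 * σ i, (hnorm i x.1 x.2).1⟩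
  invFun x := ⟨σ i * x.1 * (σ i)⁻¹, (hnorm i x.1 x.2).2⟩
  left_inv x := by
    apply Subtype.ext
    show σ i * ((σ i)⁻¹ * x.1 * σ i) * (σ i)⁻¹ = x.1
    group
  right_inv x := by
    apply Subtype.ext
    show (σ i)⁻¹ * (σ i * x.1 * (σ i)⁻¹) * σ i = x.1
    group
  map_mul' x y := by
    apply Subtype.ext
    show (σ i)⁻¹ * (x.1 * y.1) * σ i = ((σ i)⁻¹ * x.1 * σ i) * ((σ i)⁻¹ * y.1 * σ i)
    group

namespace MFP

open Loop

variable {Q : Type*} [Loop Q]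

/-- two-sided inverse (defined as right inverse) -/
noncomputable def iv (a : Q) : Q := Classical.choose (Loop.existsUnique_ldiv a 1).exists

theorem mul_iv (a : Q) : a * iv a = 1 := Classical.choose_spec (Loop.existsUnique_ldiv a 1).exists

section
variable (hM : IsMoufang Q)
include hM

theorem lip (a z : Q) : iv a * (a * z) = z := by
  have h := hM a (iv a) z
  rw [mul_iv, Loop.one_mul] at h
  exact Loop.mul_left_cancel' h.symm

theorem iv_mul (a : Q) : iv a * a = 1 := by
  have := lip hM a 1
  rwa [Loop.mul_one] at this

theorem iv_iv (a : Q) : iv (iv a) = a := by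
  have h1 : iv a * iv (iv a) = 1 := mul_iv (iv a)
  have h2 : iv a * a = 1 := iv_mul hM a
  exact Loop.mul_left_cancel' (h1.trans h2.symm)

theorem lip' (a z : Q) : a * (iv a * z) = z := by
  have := lip hM (iv a) z
  rwa [iv_iv hM] at this

omit hM in
theorem iv_one : iv (1 : Q) = 1 := by
  have := mul_iv (1 : Q)
  rwa [Loop.one_mul] at this

theorem rip (z a : Q) : (z * a) * iv a = z := by
  obtain ⟨y, hy⟩ := (Loop.mul_left_bijective a).2 z
  simp only at hy
  subst hy
  have h := hM a y (iv a)
  rw [mul_iv, Loop.mul_one] at h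
  exact h

theorem rip' (z a : Q) : (z * iv a) * a = z := by
  have := rip hM z (iv a)
  rwa [iv_iv hM] at this

theorem iv_mul_rev (a b : Q) : iv (a * b) = iv b * iv a := by
  have h1 : iv (a * b) * a = iv b := by
    have := lip hM (a * b) (iv b)
    rwa [rip hM a b] at this
  have := rip hM (iv (a * b)) a
  rw [h1] at this
  exact this.symm

theorem iv_eq_one {a : Q} (h : iv a = 1) : a = 1 := by
  have := iv_iv hM a
  rw [h, iv_one] at this
  exact this.symm

theorem flex (a b : Q) : (a * b) * a = a * (b * a) := by
  have := hM a b 1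
  rwa [Loop.mul_one, Loop.mul_one] at this

theorem m2 (x y z : Q) : ((z * x) * y) * x = z * (x * (y * x)) := by
  have h := hM (iv x) (iv y) (iv z)
  have h' := congrArg iv h
  rw [iv_mul_rev hM, iv_mul_rev hM, iv_mul_rev hM, iv_mul_rev hM, iv_mul_rev hM,
    iv_mul_rev hM, iv_iv hM, iv_iv hM, iv_iv hM] at h'
  -- h' : z * (x * (y * x)) = ((z * x) * y) * x
  exact h'.symm

theorem lbol (x y z : Q) : (x * (y * x)) * z = x * (y * (x * z)) := by
  rw [← flex hM]
  exact hM x y z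

theorem m1op (x y z : Q) : (x * y) * z = x * ((y * iv x) * (x * z)) := by
  have h := hM x (y * iv x) z
  rw [flex hM x (y * iv x), rip' hM y x] at h
  exact h

theorem mA (x y w : Q) : (y * iv x) * ((x * w) * x) = (y * w) * x := by
  rw [flex hM x w]
  have h := m2 hM x w (y * iv x)
  rw [rip' hM y x] at h
  exact h.symm

theorem m3 (x y z : Q) : (x * y) * (z * x) = x * ((y * z) * x) := by
  rw [m1op hM x y (z * x), ← flex hM x z, mA hM x y z]

-- derived identities used for net computations
theorem id_h (a x y : Q) : (a * (x * a)) * (iv a * y) = a * (x * y) := by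
  rw [← flex hM a x]
  have h := hM a x (iv a * y)
  rwa [lip' hM a y] at h

theorem id_v (a x y : Q) : (x * iv a) * (a * (y * a)) = (x * y) * a := by
  have h := m2 hM a y (x * iv a)
  rw [rip' hM x a] at h
  exact h.symm

theorem lr_comm (a y : Q) : (a * y) * iv a = a * (y * iv a) := by
  obtain ⟨z, hz⟩ := (Loop.mul_right_bijective a).2 y
  simp only at hz
  subst hz
  rw [← flex hM a z, rip hM (a*z) a, rip hM z a]

end
end MFP

set_option linter.unusedSectionVars false
namespace MFP

open Loop ThreeNet

variable {Q : Type*} [Loop Q]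

theorem lines_zero : (loopNet Q).lines 0 = {s | ∃ c : Q, s = hline c} := rfl
theorem lines_one : (loopNet Q).lines 1 = {s | ∃ c : Q, s = vline c} := rfl
theorem lines_two : (loopNet Q).lines 2 = {s | ∃ c : Q, s = tline c} := rfl

theorem hline_mem (c : Q) : hline c ∈ (loopNet Q).lines 0 := ⟨c, rfl⟩
theorem vline_mem (c : Q) : vline c ∈ (loopNet Q).lines 1 := ⟨c, rfl⟩
theorem tline_mem (c : Q) : tline c ∈ (loopNet Q).lines 2 := ⟨c, rfl⟩

theorem mem_hline {p : Q × Q} {c : Q} : p ∈ hline c ↔ p.2 = c := Iff.rfl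
theorem mem_vline {p : Q × Q} {c : Q} : p ∈ vline c ↔ p.1 = c := Iff.rfl
theorem mem_tline {p : Q × Q} {c : Q} : p ∈ tline c ↔ p.1 * p.2 = c := Iff.rfl

/-- helper to compute images of lines under permutations -/
theorem image_eq {P : Type*} (f : Equiv.Perm P) {A B : Set P}
    (h1 : ∀ p ∈ A, f p ∈ B) (h2 : ∀ p ∈ B, f.symm p ∈ A) : f '' A = B := by
  ext q
  constructor
  · rintro ⟨p, hp, rfl⟩; exact h1 p hp
  · intro hq; exact ⟨f.symm q, h2 q hq, f.apply_symm_apply q⟩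

theorem inv_coe {P : Type*} (f : Equiv.Perm P) : ⇑f⁻¹ = ⇑f.symm := rfl

section
variable (hM : IsMoufang Q)

/-- the Bol reflection with axis `tline c` -/
noncomputable def St (c : Q) : Equiv.Perm (Q × Q) where
  toFun p := (c * iv p.2, iv p.1 * c)
  invFun p := (c * iv p.2, iv p.1 * c)
  left_inv p := by
    simp only
    rw [iv_mul_rev hM, iv_iv hM, lip' hM, iv_mul_rev hM, iv_iv hM, rip' hM]
  right_inv p := by
    simp only
    rw [iv_mul_rev hM, iv_iv hM, lip' hM, iv_mul_rev hM, iv_iv hM, rip' hM]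

/-- the Bol reflection with axis `hline 1` -/
noncomputable def Sg0 : Equiv.Perm (Q × Q) where
  toFun p := (p.1 * p.2, iv p.2)
  invFun p := (p.1 * p.2, iv p.2)
  left_inv p := by simp only; rw [rip hM, iv_iv hM]
  right_inv p := by simp only; rw [rip hM, iv_iv hM]

/-- the Bol reflection with axis `vline 1` -/
noncomputable def Sg1 : Equiv.Perm (Q × Q) where
  toFun p := (iv p.1, p.1 * p.2)
  invFun p := (iv p.1, p.1 * p.2)
  left_inv p := by simp only; rw [iv_iv hM, lip hM]
  right_inv p := by simp only; rw [iv_iv hM, lip hM]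

/-- the Bol reflection with axis `tline 1` -/
noncomputable def Sg2 : Equiv.Perm (Q × Q) where
  toFun p := (iv p.2, iv p.1)
  invFun p := (iv p.2, iv p.1)
  left_inv p := by simp only; rw [iv_iv hM, iv_iv hM]
  right_inv p := by simp only; rw [iv_iv hM, iv_iv hM]

/-- the translation-type collineation `(x,y) ↦ (a x, y a)` -/
noncomputable def Tt (a : Q) : Equiv.Perm (Q × Q) where
  toFun p := (a * p.1, p.2 * a)
  invFun p := (iv a * p.1, p.2 * iv a)
  left_inv p := by simp only; rw [lip hM, rip hM]
  right_inv p := by simp only; rw [lip' hM, rip' hM]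

@[simp] theorem St_apply (c : Q) (p : Q × Q) : St hM c p = (c * iv p.2, iv p.1 * c) := rfl
@[simp] theorem Sg0_apply (p : Q × Q) : Sg0 hM p = (p.1 * p.2, iv p.2) := rfl
@[simp] theorem Sg1_apply (p : Q × Q) : Sg1 hM p = (iv p.1, p.1 * p.2) := rfl
@[simp] theorem Sg2_apply (p : Q × Q) : Sg2 hM p = (iv p.2, iv p.1) := rfl
@[simp] theorem Tt_apply (a : Q) (p : Q × Q) : Tt hM a p = (a * p.1, p.2 * a) := rfl

theorem St_symm (c : Q) : (St hM c).symm = St hM c := rfl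
theorem Sg0_symm : (Sg0 hM).symm = Sg0 hM := rfl
theorem Sg1_symm : (Sg1 hM).symm = Sg1 hM := rfl
theorem Sg2_symm : (Sg2 hM).symm = Sg2 hM := rfl
theorem Tt_symm (a : Q) : (Tt hM a).symm = Tt hM (iv a) := by
  apply Equiv.ext; intro p; simp only [Tt]; rfl

theorem St_inv (c : Q) : (St hM c)⁻¹ = St hM c := rfl
theorem Sg0_inv : (Sg0 hM)⁻¹ = Sg0 hM := rfl
theorem Sg1_inv : (Sg1 hM)⁻¹ = Sg1 hM := rfl
theorem Sg2_inv : (Sg2 hM)⁻¹ = Sg2 hM := rfl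
theorem Tt_inv (a : Q) : (Tt hM a)⁻¹ = Tt hM (iv a) := Tt_symm hM a

/-- conjugates of `Tt` by `Sg0`, `Sg1` -/
noncomputable def Ha (a : Q) : Equiv.Perm (Q × Q) := Sg0 hM * Tt hM a * Sg0 hM
noncomputable def Va (a : Q) : Equiv.Perm (Q × Q) := Sg1 hM * Tt hM a * Sg1 hM

theorem perm_mul_apply {P : Type*} (f g : Equiv.Perm P) (p : P) : (f * g) p = f (g p) := rfl

@[simp] theorem Ha_apply (a : Q) (p : Q × Q) : Ha hM a p = (a * (p.1 * a), iv a * p.2) := by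
  obtain ⟨x, y⟩ := p
  show Sg0 hM (Tt hM a (Sg0 hM (x, y))) = _
  simp only [Sg0_apply, Tt_apply]
  rw [m3 hM a (x*y) (iv y), rip hM, iv_mul_rev hM, iv_iv hM]

@[simp] theorem Va_apply (a : Q) (p : Q × Q) : Va hM a p = (p.1 * iv a, a * (p.2 * a)) := by
  obtain ⟨x, y⟩ := p
  show Sg1 hM (Tt hM a (Sg1 hM (x, y))) = _
  simp only [Sg1_apply, Tt_apply]
  rw [iv_mul_rev hM, iv_iv hM, m3 hM a (iv x) (x*y), lip hM]

theorem Ha_inv (a : Q) : (Ha hM a)⁻¹ = Ha hM (iv a) := by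
  simp only [Ha, _root_.mul_inv_rev, Sg0_inv, Tt_inv, mul_assoc]

theorem Va_inv (a : Q) : (Va hM a)⁻¹ = Va hM (iv a) := by
  simp only [Va, _root_.mul_inv_rev, Sg1_inv, Tt_inv, mul_assoc]

end
end MFP

set_option linter.unusedSectionVars false
namespace MFP

open Loop ThreeNet

variable {Q : Type*} [Loop Q]

section
variable (hM : IsMoufang Q)
include hM

/-- a map satisfying the Bol specification with axis `hline c` is determined -/
theorem det_h {c : Q} {f : Q × Q → Q × Q}
    (hB : (loopNet Q).BolSpec 0 (hline c) f) (p : Q × Q) :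
    f p = ((p.1 * p.2) * iv c, c * (iv p.2 * c)) := by
  have h := hB 1 2 (by decide) (by decide) (by decide) p
    (vline p.1) (vline_mem _) (tline (p.1 * p.2)) (tline_mem _) rfl rfl
    (p.1, c) rfl rfl
    ((p.1 * p.2) * iv c, c) (rip' hM _ _) rfl
    (vline ((p.1 * p.2) * iv c)) (vline_mem _) (tline (p.1 * c)) (tline_mem _) rfl rfl
  obtain ⟨h1, h2⟩ := h
  rw [mem_vline] at h1
  rw [mem_tline, h1] at h2
  have key : ((p.1 * p.2) * iv c) * (c * (iv p.2 * c)) = p.1 * c := by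
    rw [id_v hM c (p.1 * p.2) (iv p.2), rip hM]
  rw [Prod.ext_iff]
  exact ⟨h1, Loop.mul_left_cancel' (h2.trans key.symm)⟩

/-- a map satisfying the Bol specification with axis `vline c` is determined -/
theorem det_v {c : Q} {f : Q × Q → Q × Q}
    (hB : (loopNet Q).BolSpec 1 (vline c) f) (p : Q × Q) :
    f p = (c * (iv p.1 * c), iv c * (p.1 * p.2)) := by
  have h := hB 0 2 (by decide) (by decide) (by decide) p
    (hline p.2) (hline_mem _) (tline (p.1 * p.2)) (tline_mem _) rfl rfl
    (c, p.2) rfl rfl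
    (c, iv c * (p.1 * p.2)) (lip' hM _ _) rfl
    (hline (iv c * (p.1 * p.2))) (hline_mem _) (tline (c * p.2)) (tline_mem _) rfl rfl
  obtain ⟨h1, h2⟩ := h
  rw [mem_hline] at h1
  rw [mem_tline, h1] at h2
  have key : (c * (iv p.1 * c)) * (iv c * (p.1 * p.2)) = c * p.2 := by
    rw [id_h hM c (iv p.1) (p.1 * p.2), lip hM]
  rw [Prod.ext_iff]
  exact ⟨Loop.mul_right_cancel' (h2.trans key.symm), h1⟩

/-- a map satisfying the Bol specification with axis `tline c` is determined -/
theorem det_t {c : Q} {f : Q × Q → Q × Q}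
    (hB : (loopNet Q).BolSpec 2 (tline c) f) (p : Q × Q) :
    f p = (c * iv p.2, iv p.1 * c) := by
  have h := hB 0 1 (by decide) (by decide) (by decide) p
    (hline p.2) (hline_mem _) (vline p.1) (vline_mem _) rfl rfl
    (c * iv p.2, p.2) rfl (rip' hM _ _)
    (p.1, iv p.1 * c) rfl (lip' hM _ _)
    (hline (iv p.1 * c)) (hline_mem _) (vline (c * iv p.2)) (vline_mem _) rfl rfl
  obtain ⟨h1, h2⟩ := h
  rw [mem_hline] at h1
  rw [mem_vline] at h2
  rw [Prod.ext_iff]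
  exact ⟨h2, h1⟩

/-- `St c` satisfies the Bol specification with axis `tline c` -/
theorem bolspec_St (c : Q) : (loopNet Q).BolSpec 2 (tline c) (St hM c) := by
  intro j k hj hk hjk p aj haj ak hak hpj hpk qj hqjaj hqjl qk hqkak hqkl bj hbj bk hbk hqkbj hqjbk
  have main : ∀ (a0 : Set (Q × Q)), a0 ∈ (loopNet Q).lines 0 → ∀ (a1 : Set (Q × Q)),
      a1 ∈ (loopNet Q).lines 1 → p ∈ a0 → p ∈ a1 →
      ∀ q0, q0 ∈ a0 → q0 ∈ tline c → ∀ q1, q1 ∈ a1 → q1 ∈ tline c →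
      ∀ b0, b0 ∈ (loopNet Q).lines 0 → ∀ b1, b1 ∈ (loopNet Q).lines 1 →
      q1 ∈ b0 → q0 ∈ b1 → St hM c p ∈ b0 ∧ St hM c p ∈ b1 := by
    intro a0 ha0 a1 ha1 hp0 hp1 q0 hq0a hq0l q1 hq1a hq1l b0 hb0 b1 hb1 hq1b0 hq0b1
    obtain ⟨d0, rfl⟩ := ha0
    obtain ⟨d1, rfl⟩ := ha1
    obtain ⟨e0, rfl⟩ := hb0
    obtain ⟨e1, rfl⟩ := hb1
    rw [mem_hline] at hp0
    rw [mem_vline] at hp1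
    rw [mem_hline] at hq0a
    rw [mem_vline] at hq1a
    rw [mem_tline] at hq0l hq1l
    rw [mem_hline] at hq1b0
    rw [mem_vline] at hq0b1
    rw [hq1a] at hq1l
    rw [hq0a] at hq0l
    constructor
    · -- St c p ∈ hline e0, where e0 = q1.2 with q1 = (p.1, iv p.1 * c)
      have h' : q1.2 = iv p.1 * c := by rw [hp1, ← hq1l, lip hM]
      rw [mem_hline, St_apply, ← hq1b0, h']
    · -- St c p ∈ vline e1, where e1 = q0.1 = c * iv p.2
      have h' : q0.1 = c * iv p.2 := by rw [hp0, ← hq0l, rip hM]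
      rw [mem_vline, St_apply, ← hq0b1, h']
  -- now dispatch on j k
  fin_cases j <;> fin_cases k <;> first
    | exact absurd rfl hjk
    | exact absurd rfl hj
    | exact absurd rfl hk
    | exact main aj haj ak hak hpj hpk qj hqjaj hqjl qk hqkak hqkl bj hbj bk hbk hqkbj hqjbk
    | exact (fun h => ⟨h.2, h.1⟩) (main ak hak aj haj hpk hpj qk hqkak hqkl qj hqjaj hqjl bk hbk bj hbj hqjbk hqkbj)

-- images of lines under St
theorem St_img_h (c d : Q) : St hM c '' hline d = vline (c * iv d) := by
  apply image_eq
  · rintro ⟨x, y⟩ hp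
    rw [mem_hline] at hp; subst hp
    exact rfl
  · rintro ⟨x, y⟩ hq
    rw [mem_vline] at hq; subst hq
    rw [St_symm, mem_hline, St_apply]
    show iv (c * iv d) * c = d
    rw [iv_mul_rev hM, iv_iv hM, rip' hM]

theorem St_img_v (c d : Q) : St hM c '' vline d = hline (iv d * c) := by
  apply image_eq
  · rintro ⟨x, y⟩ hp
    rw [mem_vline] at hp; subst hp
    exact rfl
  · rintro ⟨x, y⟩ hq
    rw [mem_hline] at hq; subst hq
    rw [St_symm, mem_vline, St_apply]
    show c * iv (iv d * c) = d
    rw [iv_mul_rev hM, iv_iv hM, lip' hM]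

theorem St_img_t (c d : Q) : St hM c '' tline d = tline (c * (iv d * c)) := by
  apply image_eq
  · rintro ⟨x, y⟩ hp
    rw [mem_tline] at hp
    rw [mem_tline, St_apply]
    show (c * iv y) * (iv x * c) = c * (iv d * c)
    rw [m3 hM, ← iv_mul_rev hM, hp]
  · rintro ⟨x, y⟩ hq
    rw [mem_tline] at hq
    rw [St_symm, mem_tline, St_apply]
    show (c * iv y) * (iv x * c) = d
    rw [m3 hM, ← iv_mul_rev hM, hq, iv_mul_rev hM, iv_mul_rev hM, iv_iv hM,
      rip' hM, lip' hM]

theorem isColl_St (c : Q) : (loopNet Q).IsColl (St hM c) := by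
  constructor
  · rintro ℓ ⟨i, hi⟩
    fin_cases i
    · obtain ⟨d, rfl⟩ := hi
      exact ⟨1, by rw [St_img_h hM]; exact vline_mem _⟩
    · obtain ⟨d, rfl⟩ := hi
      exact ⟨0, by rw [St_img_v hM]; exact hline_mem _⟩
    · obtain ⟨d, rfl⟩ := hi
      exact ⟨2, by rw [St_img_t hM]; exact tline_mem _⟩
  · rintro ℓ ⟨i, hi⟩
    rw [St_inv]
    fin_cases i
    · obtain ⟨d, rfl⟩ := hi
      exact ⟨1, by rw [St_img_h hM]; exact vline_mem _⟩
    · obtain ⟨d, rfl⟩ := hi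
      exact ⟨0, by rw [St_img_v hM]; exact hline_mem _⟩
    · obtain ⟨d, rfl⟩ := hi
      exact ⟨2, by rw [St_img_t hM]; exact tline_mem _⟩

end
end MFP

set_option linter.unusedSectionVars false
set_option maxHeartbeats 1000000
namespace MFP

open Loop ThreeNet

variable {Q : Type*} [Loop Q]

section
variable (hM : IsMoufang Q)
include hM

/-! ### images of lines under `Tt`, `Ha`, `Va` -/

theorem Tt_img_h (a d : Q) : Tt hM a '' hline d = hline (d * a) := by
  apply image_eq
  · rintro ⟨x, y⟩ hp; rw [mem_hline] at hp; subst hp; exact rfl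
  · rintro ⟨x, y⟩ hq; rw [mem_hline] at hq; subst hq
    rw [Tt_symm, mem_hline, Tt_apply]
    exact rip hM d a

theorem Tt_img_v (a d : Q) : Tt hM a '' vline d = vline (a * d) := by
  apply image_eq
  · rintro ⟨x, y⟩ hp; rw [mem_vline] at hp; subst hp; exact rfl
  · rintro ⟨x, y⟩ hq; rw [mem_vline] at hq; subst hq
    rw [Tt_symm, mem_vline, Tt_apply]
    exact lip hM a d

theorem Tt_img_t (a d : Q) : Tt hM a '' tline d = tline (a * (d * a)) := by
  apply image_eq
  · rintro ⟨x, y⟩ hp; rw [mem_tline] at hp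
    rw [mem_tline, Tt_apply]
    show (a * x) * (y * a) = a * (d * a)
    rw [m3 hM, hp]
  · rintro ⟨x, y⟩ hq; rw [mem_tline] at hq
    rw [Tt_symm, mem_tline, Tt_apply]
    show (iv a * x) * (y * iv a) = d
    rw [m3 hM, hq, ← flex hM a d, rip hM, lip hM]

theorem Ha_img_h (a d : Q) : Ha hM a '' hline d = hline (iv a * d) := by
  apply image_eq
  · rintro ⟨x, y⟩ hp; rw [mem_hline] at hp; subst hp
    rw [mem_hline, Ha_apply]
  · rintro ⟨x, y⟩ hq; rw [mem_hline] at hq; subst hq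
    show (Ha hM a)⁻¹ (x, iv a * d) ∈ hline d
    rw [Ha_inv, mem_hline, Ha_apply]
    show iv (iv a) * (iv a * d) = d
    rw [iv_iv hM, lip' hM]

theorem Ha_img_v (a d : Q) : Ha hM a '' vline d = vline (a * (d * a)) := by
  apply image_eq
  · rintro ⟨x, y⟩ hp; rw [mem_vline] at hp; subst hp
    rw [mem_vline, Ha_apply]
  · rintro ⟨x, y⟩ hq; rw [mem_vline] at hq; subst hq
    show (Ha hM a)⁻¹ (a * (d * a), y) ∈ vline d
    rw [Ha_inv, mem_vline, Ha_apply]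
    show iv a * ((a * (d * a)) * iv a) = d
    rw [← flex hM a d, rip hM, lip hM]

theorem Ha_img_t (a d : Q) : Ha hM a '' tline d = tline (a * d) := by
  apply image_eq
  · rintro ⟨x, y⟩ hp; rw [mem_tline] at hp
    rw [mem_tline, Ha_apply]
    show (a * (x * a)) * (iv a * y) = a * d
    rw [id_h hM, hp]
  · rintro ⟨x, y⟩ hq; rw [mem_tline] at hq
    show (Ha hM a)⁻¹ (x, y) ∈ tline d
    rw [Ha_inv, mem_tline, Ha_apply]
    show (iv a * (x * iv a)) * (iv (iv a) * y) = d
    rw [id_h hM, hq, lip hM]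

theorem Va_img_h (a d : Q) : Va hM a '' hline d = hline (a * (d * a)) := by
  apply image_eq
  · rintro ⟨x, y⟩ hp; rw [mem_hline] at hp; subst hp
    rw [mem_hline, Va_apply]
  · rintro ⟨x, y⟩ hq; rw [mem_hline] at hq; subst hq
    show (Va hM a)⁻¹ (x, a * (d * a)) ∈ hline d
    rw [Va_inv, mem_hline, Va_apply]
    show iv a * ((a * (d * a)) * iv a) = d
    rw [← flex hM a d, rip hM, lip hM]

theorem Va_img_v (a d : Q) : Va hM a '' vline d = vline (d * iv a) := by
  apply image_eq
  · rintro ⟨x, y⟩ hp; rw [mem_vline] at hp; subst hp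
    rw [mem_vline, Va_apply]
  · rintro ⟨x, y⟩ hq; rw [mem_vline] at hq; subst hq
    show (Va hM a)⁻¹ (d * iv a, y) ∈ vline d
    rw [Va_inv, mem_vline, Va_apply]
    show (d * iv a) * iv (iv a) = d
    rw [iv_iv hM, rip' hM]

theorem Va_img_t (a d : Q) : Va hM a '' tline d = tline (d * a) := by
  apply image_eq
  · rintro ⟨x, y⟩ hp; rw [mem_tline] at hp
    rw [mem_tline, Va_apply]
    show (x * iv a) * (a * (y * a)) = d * a
    rw [id_v hM, hp]
  · rintro ⟨x, y⟩ hq; rw [mem_tline] at hq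
    show (Va hM a)⁻¹ (x, y) ∈ tline d
    rw [Va_inv, mem_tline, Va_apply]
    show (x * iv (iv a)) * (iv a * (y * iv a)) = d
    rw [id_v hM, hq, rip hM]

omit hM in
theorem mem_dirPres {f : Equiv.Perm (Q × Q)} : f ∈ (loopNet Q).dirPres ↔
    ∀ i, ∀ ℓ ∈ (loopNet Q).lines i,
      f '' ℓ ∈ (loopNet Q).lines i ∧ ⇑f⁻¹ '' ℓ ∈ (loopNet Q).lines i := Iff.rfl

theorem Tt_mem_dirPres (a : Q) : Tt hM a ∈ (loopNet Q).dirPres := by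
  rw [mem_dirPres]
  intro i ℓ hℓ
  fin_cases i
  · obtain ⟨d, rfl⟩ := hℓ
    exact ⟨by rw [Tt_img_h hM]; exact hline_mem _,
      by rw [Tt_inv, Tt_img_h hM]; exact hline_mem _⟩
  · obtain ⟨d, rfl⟩ := hℓ
    exact ⟨by rw [Tt_img_v hM]; exact vline_mem _,
      by rw [Tt_inv, Tt_img_v hM]; exact vline_mem _⟩
  · obtain ⟨d, rfl⟩ := hℓ
    exact ⟨by rw [Tt_img_t hM]; exact tline_mem _,
      by rw [Tt_inv, Tt_img_t hM]; exact tline_mem _⟩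

theorem Ha_mem_dirPres (a : Q) : Ha hM a ∈ (loopNet Q).dirPres := by
  rw [mem_dirPres]
  intro i ℓ hℓ
  fin_cases i
  · obtain ⟨d, rfl⟩ := hℓ
    exact ⟨by rw [Ha_img_h hM]; exact hline_mem _,
      by rw [Ha_inv, Ha_img_h hM]; exact hline_mem _⟩
  · obtain ⟨d, rfl⟩ := hℓ
    exact ⟨by rw [Ha_img_v hM]; exact vline_mem _,
      by rw [Ha_inv, Ha_img_v hM]; exact vline_mem _⟩
  · obtain ⟨d, rfl⟩ := hℓ
    exact ⟨by rw [Ha_img_t hM]; exact tline_mem _,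
      by rw [Ha_inv, Ha_img_t hM]; exact tline_mem _⟩

theorem Va_mem_dirPres (a : Q) : Va hM a ∈ (loopNet Q).dirPres := by
  rw [mem_dirPres]
  intro i ℓ hℓ
  fin_cases i
  · obtain ⟨d, rfl⟩ := hℓ
    exact ⟨by rw [Va_img_h hM]; exact hline_mem _,
      by rw [Va_inv, Va_img_h hM]; exact hline_mem _⟩
  · obtain ⟨d, rfl⟩ := hℓ
    exact ⟨by rw [Va_img_v hM]; exact vline_mem _,
      by rw [Va_inv, Va_img_v hM]; exact vline_mem _⟩
  · obtain ⟨d, rfl⟩ := hℓ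
    exact ⟨by rw [Va_img_t hM]; exact tline_mem _,
      by rw [Va_inv, Va_img_t hM]; exact tline_mem _⟩

/-! ### relations among the `Sg i` and conjugation formulas -/

theorem rel0 : Sg0 hM * Sg0 hM = 1 := by
  have h := mul_inv_cancel (Sg0 hM)
  rwa [Sg0_inv hM] at h

theorem rel1 : Sg1 hM * Sg1 hM = 1 := by
  have h := mul_inv_cancel (Sg1 hM)
  rwa [Sg1_inv hM] at h

theorem braid1 : Sg0 hM * Sg1 hM * Sg0 hM = Sg2 hM := by
  apply Equiv.ext; rintro ⟨x, y⟩
  show Sg0 hM (Sg1 hM (Sg0 hM (x, y))) = _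
  simp only [Sg0_apply, Sg1_apply, Sg2_apply]
  rw [rip hM, iv_mul_rev hM, rip' hM]

theorem braid2 : Sg1 hM * Sg0 hM * Sg1 hM = Sg2 hM := by
  apply Equiv.ext; rintro ⟨x, y⟩
  show Sg1 hM (Sg0 hM (Sg1 hM (x, y))) = _
  simp only [Sg0_apply, Sg1_apply, Sg2_apply]
  rw [lip hM, iv_mul_rev hM, lip' hM]

theorem TtSt (a : Q) : Tt hM a = St hM a * St hM 1 := by
  apply Equiv.ext; rintro ⟨x, y⟩
  show _ = St hM a (St hM 1 (x, y))
  simp only [St_apply, Tt_apply]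
  rw [Loop.mul_one, Loop.one_mul, iv_iv hM, iv_iv hM]

theorem c2T (a : Q) : Sg2 hM * Tt hM a * Sg2 hM = Tt hM (iv a) := by
  apply Equiv.ext; rintro ⟨x, y⟩
  show Sg2 hM (Tt hM a (Sg2 hM (x, y))) = _
  simp only [Sg2_apply, Tt_apply]
  rw [iv_mul_rev hM, iv_mul_rev hM, iv_iv hM, iv_iv hM]

theorem c1H (a : Q) : Sg1 hM * Ha hM a * Sg1 hM = Ha hM (iv a) := by
  apply Equiv.ext; rintro ⟨x, y⟩
  show Sg1 hM (Ha hM a (Sg1 hM (x, y))) = _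
  simp only [Sg1_apply, Ha_apply]
  rw [id_h hM, lip hM, iv_mul_rev hM, iv_mul_rev hM, iv_iv hM, flex hM]
  simp only [iv_iv hM]

theorem c0V (a : Q) : Sg0 hM * Va hM a * Sg0 hM = Va hM (iv a) := by
  apply Equiv.ext; rintro ⟨x, y⟩
  show Sg0 hM (Va hM a (Sg0 hM (x, y))) = _
  simp only [Sg0_apply, Va_apply]
  rw [id_v hM, rip hM, iv_mul_rev hM, iv_mul_rev hM, iv_iv hM, flex hM]
  simp only [iv_iv hM]

theorem c2H (a : Q) : Sg2 hM * Ha hM a * Sg2 hM = Va hM (iv a) := by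
  apply Equiv.ext; rintro ⟨x, y⟩
  show Sg2 hM (Ha hM a (Sg2 hM (x, y))) = _
  simp only [Sg2_apply, Ha_apply, Va_apply]
  rw [iv_mul_rev hM, iv_mul_rev hM, iv_iv hM, iv_iv hM, iv_mul_rev hM, flex hM]
  simp only [iv_iv hM]

theorem c2V (a : Q) : Sg2 hM * Va hM a * Sg2 hM = Ha hM (iv a) := by
  apply Equiv.ext; rintro ⟨x, y⟩
  show Sg2 hM (Va hM a (Sg2 hM (x, y))) = _
  simp only [Sg2_apply, Ha_apply, Va_apply]
  rw [iv_mul_rev hM, iv_mul_rev hM, iv_iv hM, iv_iv hM, iv_mul_rev hM, flex hM]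
  simp only [iv_iv hM]

theorem c0H (a : Q) : Sg0 hM * Ha hM a * Sg0 hM = Tt hM a := by
  show Sg0 hM * (Sg0 hM * Tt hM a * Sg0 hM) * Sg0 hM = Tt hM a
  have h0 := rel0 hM
  calc Sg0 hM * (Sg0 hM * Tt hM a * Sg0 hM) * Sg0 hM
      = (Sg0 hM * Sg0 hM) * Tt hM a * (Sg0 hM * Sg0 hM) := by group
    _ = Tt hM a := by rw [h0, _root_.one_mul, _root_.mul_one]

theorem c1V (a : Q) : Sg1 hM * Va hM a * Sg1 hM = Tt hM a := by
  show Sg1 hM * (Sg1 hM * Tt hM a * Sg1 hM) * Sg1 hM = Tt hM a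
  have h1 := rel1 hM
  calc Sg1 hM * (Sg1 hM * Tt hM a * Sg1 hM) * Sg1 hM
      = (Sg1 hM * Sg1 hM) * Tt hM a * (Sg1 hM * Sg1 hM) := by group
    _ = Tt hM a := by rw [h1, _root_.one_mul, _root_.mul_one]

theorem HVT (a : Q) : Ha hM a * Va hM a = Tt hM a := by
  apply Equiv.ext; rintro ⟨x, y⟩
  show Ha hM a (Va hM a (x, y)) = _
  simp only [Ha_apply, Va_apply, Tt_apply]
  rw [rip' hM, lip hM]

theorem Tmul (a b : Q) : Ha hM a * Tt hM b * Va hM a = Tt hM (a * b) := by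
  apply Equiv.ext; rintro ⟨x, y⟩
  show Ha hM a (Tt hM b (Va hM a (x, y))) = _
  simp only [Ha_apply, Va_apply, Tt_apply]
  rw [← m3 hM a b (x * iv a), rip' hM, lbol hM, lip hM]

end
end MFP

set_option linter.unusedSectionVars false
set_option maxHeartbeats 1000000
namespace MFP

open Loop ThreeNet

variable {Q : Type*} [Loop Q]

section
variable (hM : IsMoufang Q)

def SixSet : Set (Equiv.Perm (Q × Q)) :=
  {1, Sg0 hM, Sg1 hM, Sg0 hM * Sg1 hM, Sg1 hM * Sg0 hM, Sg2 hM}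

/-- generators of `G0`: the three families of translations -/
def TGen : Set (Equiv.Perm (Q × Q)) :=
  {f | (∃ a, f = Tt hM a) ∨ (∃ a, f = Ha hM a) ∨ (∃ a, f = Va hM a)}

noncomputable def G0 : Subgroup (Equiv.Perm (Q × Q)) := Subgroup.closure (TGen hM)

theorem Tt_mem_G0 (a : Q) : Tt hM a ∈ G0 hM :=
  Subgroup.subset_closure (Or.inl ⟨a, rfl⟩)
theorem Ha_mem_G0 (a : Q) : Ha hM a ∈ G0 hM :=
  Subgroup.subset_closure (Or.inr (Or.inl ⟨a, rfl⟩))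
theorem Va_mem_G0 (a : Q) : Va hM a ∈ G0 hM :=
  Subgroup.subset_closure (Or.inr (Or.inr ⟨a, rfl⟩))

include hM in
theorem conj_hom_aux {G : Type*} [Group G] (u x y : G) (h : u * u = 1) :
    u * (x * y) * u = (u * x * u) * (u * y * u) := by
  calc u * (x * y) * u = u * (x * ((1 : G) * y)) * u := by rw [_root_.one_mul]
    _ = u * (x * ((u * u) * y)) * u := by rw [h]
    _ = (u * x * u) * (u * y * u) := by group

theorem conj0_G0 : ∀ g ∈ G0 hM, Sg0 hM * g * Sg0 hM ∈ G0 hM := by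
  intro g hg
  induction hg using Subgroup.closure_induction with
  | mem f hf =>
    rcases hf with ⟨a, rfl⟩ | ⟨a, rfl⟩ | ⟨a, rfl⟩
    · exact Ha_mem_G0 hM a
    · rw [c0H hM]; exact Tt_mem_G0 hM a
    · rw [c0V hM]; exact Va_mem_G0 hM (iv a)
  | one => rw [_root_.mul_one, rel0 hM]; exact one_mem _
  | mul x y hx hy ihx ihy =>
    rw [conj_hom_aux hM _ _ _ (rel0 hM)]; exact mul_mem ihx ihy
  | inv x hx ihx =>
    have e : Sg0 hM * x⁻¹ * Sg0 hM = (Sg0 hM * x * Sg0 hM)⁻¹ := by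
      rw [_root_.mul_inv_rev, _root_.mul_inv_rev, Sg0_inv hM]; group
    rw [e]; exact inv_mem ihx

theorem conj1_G0 : ∀ g ∈ G0 hM, Sg1 hM * g * Sg1 hM ∈ G0 hM := by
  intro g hg
  induction hg using Subgroup.closure_induction with
  | mem f hf =>
    rcases hf with ⟨a, rfl⟩ | ⟨a, rfl⟩ | ⟨a, rfl⟩
    · exact Va_mem_G0 hM a
    · rw [c1H hM]; exact Ha_mem_G0 hM (iv a)
    · rw [c1V hM]; exact Tt_mem_G0 hM a
  | one => rw [_root_.mul_one, rel1 hM]; exact one_mem _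
  | mul x y hx hy ihx ihy =>
    rw [conj_hom_aux hM _ _ _ (rel1 hM)]; exact mul_mem ihx ihy
  | inv x hx ihx =>
    have e : Sg1 hM * x⁻¹ * Sg1 hM = (Sg1 hM * x * Sg1 hM)⁻¹ := by
      rw [_root_.mul_inv_rev, _root_.mul_inv_rev, Sg1_inv hM]; group
    rw [e]; exact inv_mem ihx

theorem rel2 : Sg2 hM * Sg2 hM = 1 := by
  have h := mul_inv_cancel (Sg2 hM)
  rwa [Sg2_inv hM] at h

theorem conj2_G0 : ∀ g ∈ G0 hM, Sg2 hM * g * Sg2 hM ∈ G0 hM := by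
  intro g hg
  induction hg using Subgroup.closure_induction with
  | mem f hf =>
    rcases hf with ⟨a, rfl⟩ | ⟨a, rfl⟩ | ⟨a, rfl⟩
    · rw [c2T hM]; exact Tt_mem_G0 hM (iv a)
    · rw [c2H hM]; exact Va_mem_G0 hM (iv a)
    · rw [c2V hM]; exact Ha_mem_G0 hM (iv a)
  | one => rw [_root_.mul_one, rel2 hM]; exact one_mem _
  | mul x y hx hy ihx ihy =>
    rw [conj_hom_aux hM _ _ _ (rel2 hM)]; exact mul_mem ihx ihy
  | inv x hx ihx =>
    have e : Sg2 hM * x⁻¹ * Sg2 hM = (Sg2 hM * x * Sg2 hM)⁻¹ := by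
      rw [_root_.mul_inv_rev, _root_.mul_inv_rev, Sg2_inv hM]; group
    rw [e]; exact inv_mem ihx

theorem six_conj : ∀ s ∈ SixSet hM, ∀ g ∈ G0 hM, s * g * s⁻¹ ∈ G0 hM := by
  intro s hs g hg
  rcases hs with rfl | rfl | rfl | rfl | rfl | rfl
  · rw [inv_one, _root_.mul_one, _root_.one_mul]; exact hg
  · rw [Sg0_inv hM]; exact conj0_G0 hM g hg
  · rw [Sg1_inv hM]; exact conj1_G0 hM g hg
  · have e : (Sg0 hM * Sg1 hM) * g * (Sg0 hM * Sg1 hM)⁻¹ =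
        Sg0 hM * (Sg1 hM * g * Sg1 hM) * Sg0 hM := by
      rw [_root_.mul_inv_rev, Sg0_inv hM, Sg1_inv hM]; group
    rw [e]; exact conj0_G0 hM _ (conj1_G0 hM g hg)
  · have e : (Sg1 hM * Sg0 hM) * g * (Sg1 hM * Sg0 hM)⁻¹ =
        Sg1 hM * (Sg0 hM * g * Sg0 hM) * Sg1 hM := by
      rw [_root_.mul_inv_rev, Sg0_inv hM, Sg1_inv hM]; group
    rw [e]; exact conj1_G0 hM _ (conj0_G0 hM g hg)
  · rw [Sg2_inv hM]; exact conj2_G0 hM g hg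

theorem c_eq : Sg2 hM = Sg0 hM * (Sg1 hM * Sg0 hM) := by
  rw [← braid1 hM, mul_assoc]

theorem r0x (x : Equiv.Perm (Q × Q)) : Sg0 hM * (Sg0 hM * x) = x := by
  rw [← mul_assoc, rel0 hM, _root_.one_mul]

theorem r1x (x : Equiv.Perm (Q × Q)) : Sg1 hM * (Sg1 hM * x) = x := by
  rw [← mul_assoc, rel1 hM, _root_.one_mul]

theorem br : Sg1 hM * (Sg0 hM * Sg1 hM) = Sg0 hM * (Sg1 hM * Sg0 hM) := by
  rw [← mul_assoc, ← mul_assoc, braid1 hM, braid2 hM]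

theorem brx (x : Equiv.Perm (Q × Q)) :
    Sg1 hM * (Sg0 hM * (Sg1 hM * x)) = Sg0 hM * (Sg1 hM * (Sg0 hM * x)) := by
  have h1 : Sg1 hM * (Sg0 hM * (Sg1 hM * x)) = (Sg1 hM * Sg0 hM * Sg1 hM) * x := by group
  have h2 : Sg0 hM * (Sg1 hM * (Sg0 hM * x)) = (Sg0 hM * Sg1 hM * Sg0 hM) * x := by group
  rw [h1, h2, braid1 hM, braid2 hM]

theorem six_mul : ∀ s ∈ SixSet hM, ∀ t ∈ SixSet hM, s * t ∈ SixSet hM := by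
  intro s hs t ht
  simp only [SixSet, Set.mem_insert_iff, Set.mem_singleton_iff] at hs ht ⊢
  rcases hs with rfl | rfl | rfl | rfl | rfl | rfl <;>
    rcases ht with rfl | rfl | rfl | rfl | rfl | rfl <;>
      simp only [c_eq hM, mul_assoc, r0x hM, r1x hM, brx hM, br hM, rel0 hM, rel1 hM,
        _root_.one_mul, _root_.mul_one, eq_self_iff_true, true_or, or_true]

theorem six_inv : ∀ s ∈ SixSet hM, s⁻¹ ∈ SixSet hM := by
  intro s hs
  rcases hs with rfl | rfl | rfl | rfl | rfl | rfl <;>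
    simp only [SixSet, Set.mem_insert_iff, Set.mem_singleton_iff, inv_one, _root_.mul_inv_rev,
      Sg0_inv hM, Sg1_inv hM, Sg2_inv hM, eq_self_iff_true, true_or, or_true]

theorem one_mem_six : (1 : Equiv.Perm (Q × Q)) ∈ SixSet hM := Or.inl rfl
theorem Sg0_mem_six : Sg0 hM ∈ SixSet hM := Or.inr (Or.inl rfl)
theorem Sg1_mem_six : Sg1 hM ∈ SixSet hM := Or.inr (Or.inr (Or.inl rfl))
theorem Sg2_mem_six : Sg2 hM ∈ SixSet hM :=
  Or.inr (Or.inr (Or.inr (Or.inr (Or.inr rfl))))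

/-- Claim A': every element of `MGroup` factors as an element of `G0` times one
of the six reflection words through the origin. -/
theorem MGroup_decomp : ∀ w ∈ (loopNet Q).MGroup,
    ∃ g ∈ G0 hM, ∃ s ∈ SixSet hM, w = g * s := by
  intro w hw
  induction hw using Subgroup.closure_induction with
  | mem f hf =>
    obtain ⟨ℓ, ⟨i, hi, hspec⟩, _⟩ := hf
    fin_cases i
    · obtain ⟨c, rfl⟩ := hi
      refine ⟨Va hM c, Va_mem_G0 hM c, Sg0 hM, Sg0_mem_six hM, ?_⟩
      apply Equiv.ext; intro p
      rw [det_h hM hspec p]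
      show _ = Va hM c (Sg0 hM p)
      rw [Sg0_apply, Va_apply]
    · obtain ⟨c, rfl⟩ := hi
      refine ⟨Ha hM c, Ha_mem_G0 hM c, Sg1 hM, Sg1_mem_six hM, ?_⟩
      apply Equiv.ext; intro p
      rw [det_v hM hspec p]
      show _ = Ha hM c (Sg1 hM p)
      rw [Sg1_apply, Ha_apply]
    · obtain ⟨c, rfl⟩ := hi
      refine ⟨Tt hM c, Tt_mem_G0 hM c, Sg2 hM, Sg2_mem_six hM, ?_⟩
      apply Equiv.ext; intro p
      rw [det_t hM hspec p]
      show _ = Tt hM c (Sg2 hM p)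
      rw [Sg2_apply, Tt_apply]
  | one => exact ⟨1, one_mem _, 1, one_mem_six hM, (_root_.mul_one (1 : Equiv.Perm (Q × Q))).symm⟩
  | mul x y hx hy ihx ihy =>
    obtain ⟨g1, hg1, s1, hs1, rfl⟩ := ihx
    obtain ⟨g2, hg2, s2, hs2, rfl⟩ := ihy
    exact ⟨g1 * (s1 * g2 * s1⁻¹), mul_mem hg1 (six_conj hM s1 hs1 g2 hg2),
      s1 * s2, six_mul hM s1 hs1 s2 hs2, by group⟩
  | inv x hx ihx =>
    obtain ⟨g, hg, s, hs, rfl⟩ := ihx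
    exact ⟨s⁻¹ * g⁻¹ * (s⁻¹)⁻¹, six_conj hM s⁻¹ (six_inv hM s hs) g⁻¹ (inv_mem hg),
      s⁻¹, six_inv hM s hs, by group⟩

theorem G0_le_dirPres : G0 hM ≤ (loopNet Q).dirPres := by
  rw [G0, Subgroup.closure_le]
  rintro f (⟨a, rfl⟩ | ⟨a, rfl⟩ | ⟨a, rfl⟩)
  · exact Tt_mem_dirPres hM a
  · exact Ha_mem_dirPres hM a
  · exact Va_mem_dirPres hM a

/-- with a nontrivial element around, the only direction preserving element among
the six is the identity -/
theorem six_eq_one {a : Q} (ha : a ≠ 1) :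
    ∀ s ∈ SixSet hM, s ∈ (loopNet Q).dirPres → s = 1 := by
  have iv_ne : ∀ x : Q, iv x = 1 → x = 1 := fun x h => iv_eq_one hM h
  intro s hs hd
  rcases hs with rfl | rfl | rfl | rfl | rfl | rfl
  · rfl
  · exfalso
    obtain ⟨d, hd2⟩ := (hd 1 (vline 1) (vline_mem 1)).1
    have h1 : Sg0 hM (1, 1) ∈ ⇑(Sg0 hM) '' vline 1 := Set.mem_image_of_mem _ rfl
    have h2 : Sg0 hM (1, a) ∈ ⇑(Sg0 hM) '' vline 1 := Set.mem_image_of_mem _ rfl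
    rw [hd2, mem_vline, Sg0_apply] at h1 h2
    simp only at h1 h2
    rw [Loop.one_mul] at h1 h2
    exact ha (h2.trans h1.symm)
  · exfalso
    obtain ⟨d, hd2⟩ := (hd 0 (hline 1) (hline_mem 1)).1
    have h1 : Sg1 hM (1, 1) ∈ ⇑(Sg1 hM) '' hline 1 := Set.mem_image_of_mem _ rfl
    have h2 : Sg1 hM (a, 1) ∈ ⇑(Sg1 hM) '' hline 1 := Set.mem_image_of_mem _ rfl
    rw [hd2, mem_hline, Sg1_apply] at h1 h2
    simp only at h1 h2
    rw [Loop.mul_one] at h1 h2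
    exact ha (h2.trans h1.symm)
  · exfalso
    obtain ⟨d, hd2⟩ := (hd 0 (hline 1) (hline_mem 1)).1
    have h1 : (Sg0 hM * Sg1 hM) (1, 1) ∈ ⇑(Sg0 hM * Sg1 hM) '' hline 1 :=
      Set.mem_image_of_mem _ rfl
    have h2 : (Sg0 hM * Sg1 hM) (a, 1) ∈ ⇑(Sg0 hM * Sg1 hM) '' hline 1 :=
      Set.mem_image_of_mem _ rfl
    rw [hd2] at h1 h2
    have e : ∀ x : Q, (Sg0 hM * Sg1 hM) (x, 1) = (1, iv x) := by
      intro x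
      show Sg0 hM (Sg1 hM (x, 1)) = _
      rw [Sg1_apply, Sg0_apply]
      simp only
      rw [Loop.mul_one, iv_mul hM]
    rw [e, mem_hline] at h1 h2
    simp only at h1 h2
    rw [iv_one] at h1
    exact ha (iv_ne a (h2.trans h1.symm))
  · exfalso
    obtain ⟨d, hd2⟩ := (hd 1 (vline 1) (vline_mem 1)).1
    have h1 : (Sg1 hM * Sg0 hM) (1, 1) ∈ ⇑(Sg1 hM * Sg0 hM) '' vline 1 :=
      Set.mem_image_of_mem _ rfl
    have h2 : (Sg1 hM * Sg0 hM) (1, a) ∈ ⇑(Sg1 hM * Sg0 hM) '' vline 1 :=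
      Set.mem_image_of_mem _ rfl
    rw [hd2] at h1 h2
    have e : ∀ y : Q, (Sg1 hM * Sg0 hM) (1, y) = (iv y, 1) := by
      intro y
      show Sg1 hM (Sg0 hM (1, y)) = _
      rw [Sg0_apply, Sg1_apply]
      simp only
      rw [Loop.one_mul, mul_iv]
    rw [e, mem_vline] at h1 h2
    simp only at h1 h2
    rw [iv_one] at h1
    exact ha (iv_ne a (h2.trans h1.symm))
  · exfalso
    obtain ⟨d, hd2⟩ := (hd 0 (hline 1) (hline_mem 1)).1
    have h1 : Sg2 hM (1, 1) ∈ ⇑(Sg2 hM) '' hline 1 := Set.mem_image_of_mem _ rfl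
    have h2 : Sg2 hM (a, 1) ∈ ⇑(Sg2 hM) '' hline 1 := Set.mem_image_of_mem _ rfl
    rw [hd2, mem_hline, Sg2_apply] at h1 h2
    simp only at h1 h2
    rw [iv_one] at h1
    exact ha (iv_ne a (h2.trans h1.symm))

theorem MZero_le_G0 {a : Q} (ha : a ≠ 1) : (loopNet Q).MZero ≤ G0 hM := by
  intro w hw
  rw [MZero, Subgroup.mem_inf] at hw
  obtain ⟨h1, h2⟩ := hw
  obtain ⟨g, hg, s, hs, rfl⟩ := MGroup_decomp hM w h1
  have hgd : g ∈ (loopNet Q).dirPres := G0_le_dirPres hM hg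
  have hsd : s ∈ (loopNet Q).dirPres := by
    have e : s = g⁻¹ * (g * s) := by group
    rw [e]
    exact mul_mem (inv_mem hgd) h2
  rw [six_eq_one hM ha s hs hsd, _root_.mul_one]
  exact hg

end
end MFP

set_option linter.unusedSectionVars false
set_option maxHeartbeats 1000000
namespace MFP

open Loop ThreeNet

variable {Q : Type*} [Loop Q]

theorem aut_one (α : MulAut Q) : α 1 = 1 := by
  have h : α 1 * (1 : Q) = α 1 * α 1 := by
    rw [Loop.mul_one, ← _root_.map_mul, Loop.mul_one]
  exact (Loop.mul_left_cancel' h).symm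

theorem aut_iv (α : MulAut Q) (x : Q) : α (iv x) = iv (α x) := by
  have h : α x * α (iv x) = α x * iv (α x) := by
    rw [← _root_.map_mul, mul_iv, aut_one, mul_iv]
  exact Loop.mul_left_cancel' h

/-- the collineation `α × α` induced by an automorphism -/
def Aeq (α : MulAut Q) : Equiv.Perm (Q × Q) := Equiv.prodCongr α.toEquiv α.toEquiv

@[simp] theorem Aeq_apply (α : MulAut Q) (p : Q × Q) : Aeq α p = (α p.1, α p.2) := rfl

theorem Aeq_inv (α : MulAut Q) : (Aeq α)⁻¹ = Aeq α⁻¹ := rfl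

theorem Aeq_mul (α β : MulAut Q) : Aeq (α * β) = Aeq α * Aeq β := rfl

theorem Aeq_one : Aeq (1 : MulAut Q) = 1 := rfl

section
variable (hM : IsMoufang Q)

theorem Aeq_conj_Tt (α : MulAut Q) (a : Q) :
    Aeq α * Tt hM a * (Aeq α)⁻¹ = Tt hM (α a) := by
  apply Equiv.ext; rintro ⟨x, y⟩
  show Aeq α (Tt hM a ((Aeq α)⁻¹ (x, y))) = _
  show Aeq α (Tt hM a (α.symm x, α.symm y)) = _
  simp only [Tt_apply, Aeq_apply]
  rw [_root_.map_mul, _root_.map_mul]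
  show (α a * α.toEquiv (α.toEquiv.symm x), α.toEquiv (α.toEquiv.symm y) * α a) = _
  rw [Equiv.apply_symm_apply, Equiv.apply_symm_apply]

theorem Aeq_comm_Sg0 (α : MulAut Q) : Aeq α * Sg0 hM = Sg0 hM * Aeq α := by
  apply Equiv.ext; rintro ⟨x, y⟩
  show Aeq α (Sg0 hM (x, y)) = Sg0 hM (Aeq α (x, y))
  simp only [Sg0_apply, Aeq_apply]
  rw [_root_.map_mul, aut_iv]

theorem Aeq_comm_Sg1 (α : MulAut Q) : Aeq α * Sg1 hM = Sg1 hM * Aeq α := by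
  apply Equiv.ext; rintro ⟨x, y⟩
  show Aeq α (Sg1 hM (x, y)) = Sg1 hM (Aeq α (x, y))
  simp only [Sg1_apply, Aeq_apply]
  rw [_root_.map_mul, aut_iv]

theorem Aeq_comm_Sg2 (α : MulAut Q) : Aeq α * Sg2 hM = Sg2 hM * Aeq α := by
  apply Equiv.ext; rintro ⟨x, y⟩
  show Aeq α (Sg2 hM (x, y)) = Sg2 hM (Aeq α (x, y))
  simp only [Sg2_apply, Aeq_apply]
  rw [aut_iv, aut_iv]

theorem Aeq_conj_Ha (α : MulAut Q) (a : Q) :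
    Aeq α * Ha hM a * (Aeq α)⁻¹ = Ha hM (α a) := by
  show Aeq α * (Sg0 hM * Tt hM a * Sg0 hM) * (Aeq α)⁻¹ = Sg0 hM * Tt hM (α a) * Sg0 hM
  rw [← Aeq_conj_Tt hM α a]
  have h0 := Aeq_comm_Sg0 hM α
  calc Aeq α * (Sg0 hM * Tt hM a * Sg0 hM) * (Aeq α)⁻¹
      = (Aeq α * Sg0 hM) * Tt hM a * (Sg0 hM * (Aeq α)⁻¹) := by group
    _ = (Sg0 hM * Aeq α) * Tt hM a * (Sg0 hM * (Aeq α)⁻¹) := by rw [h0]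
    _ = Sg0 hM * (Aeq α * Tt hM a * (Aeq α)⁻¹) * ((Aeq α * Sg0 hM) * (Aeq α)⁻¹) := by group
    _ = Sg0 hM * (Aeq α * Tt hM a * (Aeq α)⁻¹) * ((Sg0 hM * Aeq α) * (Aeq α)⁻¹) := by rw [h0]
    _ = Sg0 hM * (Aeq α * Tt hM a * (Aeq α)⁻¹) * Sg0 hM := by group

theorem Aeq_conj_Va (α : MulAut Q) (a : Q) :
    Aeq α * Va hM a * (Aeq α)⁻¹ = Va hM (α a) := by
  show Aeq α * (Sg1 hM * Tt hM a * Sg1 hM) * (Aeq α)⁻¹ = Sg1 hM * Tt hM (α a) * Sg1 hM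
  rw [← Aeq_conj_Tt hM α a]
  have h1 := Aeq_comm_Sg1 hM α
  calc Aeq α * (Sg1 hM * Tt hM a * Sg1 hM) * (Aeq α)⁻¹
      = (Aeq α * Sg1 hM) * Tt hM a * (Sg1 hM * (Aeq α)⁻¹) := by group
    _ = (Sg1 hM * Aeq α) * Tt hM a * (Sg1 hM * (Aeq α)⁻¹) := by rw [h1]
    _ = Sg1 hM * (Aeq α * Tt hM a * (Aeq α)⁻¹) * ((Aeq α * Sg1 hM) * (Aeq α)⁻¹) := by group
    _ = Sg1 hM * (Aeq α * Tt hM a * (Aeq α)⁻¹) * ((Sg1 hM * Aeq α) * (Aeq α)⁻¹) := by rw [h1]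
    _ = Sg1 hM * (Aeq α * Tt hM a * (Aeq α)⁻¹) * Sg1 hM := by group

variable (hs0M : Sg0 hM ∈ (loopNet Q).MGroup) (hs1M : Sg1 hM ∈ (loopNet Q).MGroup)
include hs0M hs1M

omit hs0M hs1M in
theorem St_mem_MGroup (c : Q) : St hM c ∈ (loopNet Q).MGroup :=
  Subgroup.subset_closure ⟨tline c, ⟨2, tline_mem c, bolspec_St hM c⟩, isColl_St hM c⟩

omit hs0M hs1M in
theorem Tt_mem_MGroup (a : Q) : Tt hM a ∈ (loopNet Q).MGroup := by
  rw [TtSt hM]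
  exact mul_mem (St_mem_MGroup hM a) (St_mem_MGroup hM 1)

omit hs1M in
theorem Ha_mem_MGroup (a : Q) : Ha hM a ∈ (loopNet Q).MGroup :=
  mul_mem (mul_mem hs0M (Tt_mem_MGroup hM a)) hs0M

omit hs0M in
theorem Va_mem_MGroup (a : Q) : Va hM a ∈ (loopNet Q).MGroup :=
  mul_mem (mul_mem hs1M (Tt_mem_MGroup hM a)) hs1M

theorem Tt_mem_MZero (a : Q) : Tt hM a ∈ (loopNet Q).MZero :=
  Subgroup.mem_inf.mpr ⟨Tt_mem_MGroup hM a, Tt_mem_dirPres hM a⟩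

theorem Ha_mem_MZero (a : Q) : Ha hM a ∈ (loopNet Q).MZero :=
  Subgroup.mem_inf.mpr ⟨Ha_mem_MGroup hM hs0M a, Ha_mem_dirPres hM a⟩

theorem Va_mem_MZero (a : Q) : Va hM a ∈ (loopNet Q).MZero :=
  Subgroup.mem_inf.mpr ⟨Va_mem_MGroup hM hs1M a, Va_mem_dirPres hM a⟩

theorem G0_le_MZero : G0 hM ≤ (loopNet Q).MZero := by
  rw [G0, Subgroup.closure_le]
  rintro f (⟨a, rfl⟩ | ⟨a, rfl⟩ | ⟨a, rfl⟩)
  · exact Tt_mem_MZero hM hs0M hs1M a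
  · exact Ha_mem_MZero hM hs0M hs1M a
  · exact Va_mem_MZero hM hs0M hs1M a

variable {a0 : Q} (ha0 : a0 ≠ 1)
include ha0

theorem Aeq_norm (α : MulAut Q) : ∀ x ∈ (loopNet Q).MZero,
    Aeq α * x * (Aeq α)⁻¹ ∈ (loopNet Q).MZero := by
  intro x hx
  have hx0 : x ∈ G0 hM := MZero_le_G0 hM ha0 hx
  induction hx0 using Subgroup.closure_induction with
  | mem f hf =>
    rcases hf with ⟨a, rfl⟩ | ⟨a, rfl⟩ | ⟨a, rfl⟩
    · rw [Aeq_conj_Tt hM]; exact Tt_mem_MZero hM hs0M hs1M _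
    · rw [Aeq_conj_Ha hM]; exact Ha_mem_MZero hM hs0M hs1M _
    · rw [Aeq_conj_Va hM]; exact Va_mem_MZero hM hs0M hs1M _
  | one =>
    rw [_root_.mul_one, mul_inv_cancel]; exact one_mem _
  | mul y z hy hz ihy ihz =>
    have hy' := ihy (G0_le_MZero hM hs0M hs1M hy)
    have hz' := ihz (G0_le_MZero hM hs0M hs1M hz)
    have e : Aeq α * (y * z) * (Aeq α)⁻¹ =
        (Aeq α * y * (Aeq α)⁻¹) * (Aeq α * z * (Aeq α)⁻¹) := by group
    rw [e]; exact mul_mem hy' hz'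
  | inv y hy ihy =>
    have hy' := ihy (G0_le_MZero hM hs0M hs1M hy)
    have e : Aeq α * y⁻¹ * (Aeq α)⁻¹ = (Aeq α * y * (Aeq α)⁻¹)⁻¹ := by group
    rw [e]; exact inv_mem hy'

theorem Aeq_norm' (α : MulAut Q) : ∀ x ∈ (loopNet Q).MZero,
    (Aeq α)⁻¹ * x * Aeq α ∈ (loopNet Q).MZero := by
  intro x hx
  have h := Aeq_norm hM hs0M hs1M ha0 α⁻¹ x hx
  rwa [← Aeq_inv, inv_inv] at h

/-- the automorphism of `M₀` induced by conjugation with `α × α` -/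
noncomputable def Phi (α : MulAut Q) : MulAut ↥((loopNet Q).MZero) where
  toFun g := ⟨Aeq α * g.1 * (Aeq α)⁻¹, Aeq_norm hM hs0M hs1M ha0 α g.1 g.2⟩
  invFun g := ⟨(Aeq α)⁻¹ * g.1 * Aeq α, Aeq_norm' hM hs0M hs1M ha0 α g.1 g.2⟩
  left_inv g := by
    apply Subtype.ext
    show (Aeq α)⁻¹ * (Aeq α * g.1 * (Aeq α)⁻¹) * Aeq α = g.1
    group
  right_inv g := by
    apply Subtype.ext
    show Aeq α * ((Aeq α)⁻¹ * g.1 * Aeq α) * (Aeq α)⁻¹ = g.1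
    group
  map_mul' g h := by
    apply Subtype.ext
    show Aeq α * (g.1 * h.1) * (Aeq α)⁻¹ = _
    show _ = (Aeq α * g.1 * (Aeq α)⁻¹) * (Aeq α * h.1 * (Aeq α)⁻¹)
    group

theorem Phi_apply_coe (α : MulAut Q) (g : ↥((loopNet Q).MZero)) :
    ((Phi hM hs0M hs1M ha0 α g : ↥((loopNet Q).MZero)) : Equiv.Perm (Q × Q)) =
      Aeq α * g.1 * (Aeq α)⁻¹ := rfl

theorem Phi_mul (α β : MulAut Q) :
    Phi hM hs0M hs1M ha0 (α * β) =
      Phi hM hs0M hs1M ha0 α * Phi hM hs0M hs1M ha0 β := by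
  apply MulEquiv.ext
  intro g
  apply Subtype.ext
  show Aeq (α * β) * g.1 * (Aeq (α * β))⁻¹ =
    Aeq α * (Aeq β * g.1 * (Aeq β)⁻¹) * (Aeq α)⁻¹
  rw [Aeq_mul]
  group

end
end MFP

set_option linter.unusedSectionVars false
set_option maxHeartbeats 1000000
namespace MFP

open Loop ThreeNet

variable {Q : Type*} [Loop Q]

theorem dp_fst {g : Equiv.Perm (Q × Q)} (hg : g ∈ (loopNet Q).dirPres)
    (x y y' : Q) : (g (x, y)).1 = (g (x, y')).1 := by
  obtain ⟨d, hd⟩ := (hg 1 (vline x) (vline_mem x)).1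
  have h1 : g (x, y) ∈ ⇑g '' vline x := Set.mem_image_of_mem _ rfl
  have h2 : g (x, y') ∈ ⇑g '' vline x := Set.mem_image_of_mem _ rfl
  rw [hd, mem_vline] at h1 h2
  rw [h1, h2]

theorem dp_snd {g : Equiv.Perm (Q × Q)} (hg : g ∈ (loopNet Q).dirPres)
    (x x' y : Q) : (g (x, y)).2 = (g (x', y)).2 := by
  obtain ⟨d, hd⟩ := (hg 0 (hline y) (hline_mem y)).1
  have h1 : g (x, y) ∈ ⇑g '' hline y := Set.mem_image_of_mem _ rfl
  have h2 : g (x', y) ∈ ⇑g '' hline y := Set.mem_image_of_mem _ rfl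
  rw [hd, mem_hline] at h1 h2
  rw [h1, h2]

theorem dp_t {g : Equiv.Perm (Q × Q)} (hg : g ∈ (loopNet Q).dirPres)
    (x y : Q) : (g (x, y)).1 * (g (x, y)).2 = (g (x * y, 1)).1 * (g (x * y, 1)).2 := by
  obtain ⟨d, hd⟩ := (hg 2 (tline (x * y)) (tline_mem (x * y))).1
  have h1 : g (x, y) ∈ ⇑g '' tline (x * y) := Set.mem_image_of_mem _ rfl
  have h2 : g (x * y, 1) ∈ ⇑g '' tline (x * y) :=
    Set.mem_image_of_mem _ (by rw [mem_tline]; exact Loop.mul_one _)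
  rw [hd, mem_tline] at h1 h2
  rw [h1, h2]

section
variable (hM : IsMoufang Q) (σ : Fin 3 → Equiv.Perm (Q × Q))
    (hnorm : ∀ i, ∀ x ∈ (Loop.loopNet Q).MZero,
      (σ i)⁻¹ * x * σ i ∈ (Loop.loopNet Q).MZero ∧
        σ i * x * (σ i)⁻¹ ∈ (Loop.loopNet Q).MZero)
    (heq0 : σ 0 = Sg0 hM) (heq1 : σ 1 = Sg1 hM) (heq2 : σ 2 = Sg2 hM)
    (hs0M : Sg0 hM ∈ (loopNet Q).MGroup) (hs1M : Sg1 hM ∈ (loopNet Q).MGroup)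

theorem conjAut_coe (i : Fin 3) (g : ↥((loopNet Q).MZero)) :
    ((conjAutM0 Q σ hnorm i g : ↥((loopNet Q).MZero)) : Equiv.Perm (Q × Q)) =
      (σ i)⁻¹ * g.1 * σ i := rfl

include heq0 heq1 heq2 hs0M hs1M in
/-- key reconstruction: a centralizing automorphism of `M₀` maps translations to
translations -/
theorem theta_Tt (θ : MulAut ↥((loopNet Q).MZero))
    (hcm : ∀ i, ∀ g : ↥((loopNet Q).MZero),
      conjAutM0 Q σ hnorm i (θ g) = θ (conjAutM0 Q σ hnorm i g))
    (a : Q) :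
    ∃ b, ((θ ⟨Tt hM a, Tt_mem_MZero hM hs0M hs1M a⟩ : ↥((loopNet Q).MZero)) :
      Equiv.Perm (Q × Q)) = Tt hM b := by
  set u : ↥((loopNet Q).MZero) := θ ⟨Tt hM a, Tt_mem_MZero hM hs0M hs1M a⟩ with hu
  have hGd : (u : Equiv.Perm (Q × Q)) ∈ (loopNet Q).dirPres := (Subgroup.mem_inf.mp u.2).2
  set G : Equiv.Perm (Q × Q) := (u : Equiv.Perm (Q × Q)) with hGdef
  set β : Q → Q := fun x => (G (x, 1)).1 with hβ
  set γ : Q → Q := fun y => (G (1, y)).2 with hγ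
  have hG : ∀ p : Q × Q, G p = (β p.1, γ p.2) := by
    intro p
    rw [Prod.ext_iff]
    constructor
    · show (G (p.1, p.2)).1 = _
      rw [dp_fst hGd p.1 p.2 1]
    · show (G (p.1, p.2)).2 = _
      rw [dp_snd hGd p.1 1 p.2]
  have hAut : ∀ x y, β x * γ y = β (x * y) * γ 1 := by
    intro x y
    have h := dp_t hGd x y
    have e1 := hG (x, y)
    have e2 := hG (x * y, 1)
    rw [e1, e2] at h
    simpa using h
  -- K1 : Sg2-conjugation inverts u
  have k1sub : conjAutM0 Q σ hnorm 2 ⟨Tt hM a, Tt_mem_MZero hM hs0M hs1M a⟩ =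
      (⟨Tt hM a, Tt_mem_MZero hM hs0M hs1M a⟩ : ↥((loopNet Q).MZero))⁻¹ := by
    apply Subtype.ext
    rw [conjAut_coe]
    show (σ 2)⁻¹ * Tt hM a * σ 2 = (Tt hM a)⁻¹
    rw [heq2, Sg2_inv hM, Tt_inv hM]
    exact c2T hM a
  have k1 : conjAutM0 Q σ hnorm 2 u = u⁻¹ := by
    rw [hu, hcm 2, k1sub, _root_.map_inv]
  have E1 : Sg2 hM * G * Sg2 hM = G⁻¹ := by
    have := congrArg (fun v : ↥((loopNet Q).MZero) => (v : Equiv.Perm (Q × Q))) k1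
    simp only [conjAut_coe] at this
    rw [heq2, Sg2_inv hM] at this
    exact this
  have hGinv : ∀ p : Q × Q, G⁻¹ p = (iv (γ (iv p.1)), iv (β (iv p.2))) := by
    intro p
    rw [← E1]
    show Sg2 hM (G (Sg2 hM p)) = _
    rw [Sg2_apply, hG, Sg2_apply]
  have hK1a : ∀ x, β (iv (γ (iv x))) = x := by
    intro x
    have h : G (G⁻¹ (x, 1)) = (x, 1) := G.apply_symm_apply (x, 1)
    rw [hGinv, hG] at h
    exact congrArg Prod.fst h
  -- K2 : product of the 0- and 1-conjugates is u
  have k2sub : conjAutM0 Q σ hnorm 0 ⟨Tt hM a, Tt_mem_MZero hM hs0M hs1M a⟩ *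
      conjAutM0 Q σ hnorm 1 ⟨Tt hM a, Tt_mem_MZero hM hs0M hs1M a⟩ =
      ⟨Tt hM a, Tt_mem_MZero hM hs0M hs1M a⟩ := by
    apply Subtype.ext
    show ((σ 0)⁻¹ * Tt hM a * σ 0) * ((σ 1)⁻¹ * Tt hM a * σ 1) = Tt hM a
    rw [heq0, heq1, Sg0_inv hM, Sg1_inv hM]
    exact HVT hM a
  have k2 : conjAutM0 Q σ hnorm 0 u * conjAutM0 Q σ hnorm 1 u = u := by
    rw [hu, hcm 0, hcm 1, ← _root_.map_mul, k2sub]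
  have E2 : (Sg0 hM * G * Sg0 hM) * (Sg1 hM * G * Sg1 hM) = G := by
    have := congrArg (fun v : ↥((loopNet Q).MZero) => (v : Equiv.Perm (Q × Q))) k2
    simp only [Subgroup.coe_mul, conjAut_coe] at this
    rw [heq0, heq1, Sg0_inv hM, Sg1_inv hM] at this
    exact this
  have step1 : ∀ p : Q × Q, (Sg1 hM * G * Sg1 hM) p = (iv (β (iv p.1)), β p.2 * γ 1) := by
    intro p
    show Sg1 hM (G (Sg1 hM p)) = _
    rw [Sg1_apply, hG, Sg1_apply]
    simp only
    rw [hAut, lip hM]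
  have step2 : ∀ p : Q × Q, (Sg0 hM * G * Sg0 hM) p = (β p.1 * γ 1, iv (γ (iv p.2))) := by
    intro p
    show Sg0 hM (G (Sg0 hM p)) = _
    rw [Sg0_apply, hG, Sg0_apply]
    simp only
    rw [hAut, rip hM]
  have K2ab : ∀ x y : Q,
      (β (iv (β (iv x))) * γ 1 = β x) ∧ (iv (γ (iv (β y * γ 1))) = γ y) := by
    intro x y
    have h := congrArg (fun f : Equiv.Perm (Q × Q) => f (x, y)) E2
    rw [show ((Sg0 hM * G * Sg0 hM) * (Sg1 hM * G * Sg1 hM)) (x, y) =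
        (Sg0 hM * G * Sg0 hM) ((Sg1 hM * G * Sg1 hM) (x, y)) from rfl] at h
    rw [step1, step2, hG] at h
    simp only at h
    exact ⟨congrArg Prod.fst h, congrArg Prod.snd h⟩
  have K2a : ∀ x, β (iv (β (iv x))) * γ 1 = β x := fun x => (K2ab x x).1
  have K2b : ∀ y, iv (γ (iv (β y * γ 1))) = γ y := fun y => (K2ab y y).2
  -- derive the translation form
  have d0 : ∀ y, γ (iv (β y * γ 1)) = iv (γ y) := by
    intro y
    have h := congrArg iv (K2b y)
    rwa [iv_iv hM] at h
  have d1 : ∀ y, β (γ y) = β y * γ 1 := by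
    intro y
    have h := hK1a (β y * γ 1)
    rw [d0 y, iv_iv hM] at h
    exact h
  have d2 : ∀ y, β y * γ 1 = β 1 * γ y := by
    intro y
    have h := hAut 1 y
    rw [Loop.one_mul] at h
    exact h.symm
  have gsurj : ∀ v, ∃ y, γ y = v := by
    intro v
    refine ⟨(G.symm (1, v)).2, ?_⟩
    have h := G.apply_symm_apply (1, v)
    rw [hG] at h
    exact congrArg Prod.snd h
  have d3 : ∀ w, β w = β 1 * w := by
    intro w
    obtain ⟨y, rfl⟩ := gsurj w
    rw [d1 y, d2 y]
  have d4 : ∀ x, γ (x * iv (β 1)) = x := by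
    intro x
    have hW : iv (β (iv x)) = x * iv (β 1) := by
      rw [d3 (iv x), iv_mul_rev hM, iv_iv hM]
    have h := K2a x
    rw [hW, d2 (x * iv (β 1)), d3 x] at h
    exact Loop.mul_left_cancel' h
  have d5 : ∀ w, γ w = w * β 1 := by
    intro w
    have h := d4 (w * β 1)
    rwa [rip hM] at h
  refine ⟨β 1, ?_⟩
  apply Equiv.ext; intro p
  rw [hG p, Tt_apply, d3 p.1, d5 p.2]

end
end MFP

set_option linter.unusedSectionVars false
set_option maxHeartbeats 2000000

open Matrix Loop ThreeNet MFP

/-- Let `Q` be a Moufang loop and `N` its associated `3`-net, `M` the group of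
collineations generated by the Bol reflections of `N`, `M₀` the direction preserving
part of `M`, and `S ≅ S₃` the group generated by the three Bol reflections
`σ 0, σ 1, σ 2` whose axes contain the origin, acting on `M₀` by conjugation. Then
`Aut(Q)` is isomorphic to the centralizer of `S` in `Aut(M₀)`. -/
theorem aut_loop_iso_centralizer_of_S (Q : Type*) [Loop Q] (hMouf : IsMoufang Q)
    (σ : Fin 3 → Equiv.Perm (Q × Q))
    (hσ : ∀ i, (Loop.loopNet Q).BolSpec i (Loop.originLine Q i) (σ i) ∧
      (Loop.loopNet Q).IsColl (σ i))
    (hnorm : ∀ i, ∀ x ∈ (Loop.loopNet Q).MZero,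
      (σ i)⁻¹ * x * σ i ∈ (Loop.loopNet Q).MZero ∧
        σ i * x * (σ i)⁻¹ ∈ (Loop.loopNet Q).MZero) :
    Nonempty (MulAut Q ≃*
      ↥(Subgroup.centralizer (Set.range (conjAutM0 Q σ hnorm)))) := by
  rcases subsingleton_or_nontrivial Q with hsub | hnt
  · -- degenerate case
    have s2 : Subsingleton (Equiv.Perm (Q × Q)) :=
      ⟨fun f g => Equiv.ext fun x => Subsingleton.elim _ _⟩
    have s5 : Subsingleton
        ↥(Subgroup.centralizer (Set.range (conjAutM0 Q σ hnorm))) := by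
      refine ⟨fun f g => Subtype.ext ?_⟩
      apply MulEquiv.ext; intro x
      exact Subtype.ext (Subsingleton.elim _ _)
    have s1 : Subsingleton (MulAut Q) :=
      ⟨fun f g => by apply MulEquiv.ext; intro x; exact Subsingleton.elim _ _⟩
    exact ⟨{ toFun := fun _ => 1, invFun := fun _ => 1,
             left_inv := fun x => Subsingleton.elim _ _,
             right_inv := fun x => Subsingleton.elim _ _,
             map_mul' := fun _ _ => Subsingleton.elim _ _ }⟩
  · obtain ⟨a0, ha0⟩ := exists_ne (1 : Q)
    have e0 : Loop.originLine Q 0 = hline (1 : Q) := rfl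
    have e1 : Loop.originLine Q 1 = vline (1 : Q) := rfl
    have e2 : Loop.originLine Q 2 = tline (1 : Q) := rfl
    have hb0 : (loopNet Q).BolSpec 0 (hline 1) ⇑(σ 0) := by
      have h := (hσ 0).1; rwa [e0] at h
    have hb1 : (loopNet Q).BolSpec 1 (vline 1) ⇑(σ 1) := by
      have h := (hσ 1).1; rwa [e1] at h
    have hb2 : (loopNet Q).BolSpec 2 (tline 1) ⇑(σ 2) := by
      have h := (hσ 2).1; rwa [e2] at h
    have heq0 : σ 0 = Sg0 hMouf := by
      apply Equiv.ext; intro p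
      rw [det_h hMouf hb0 p, Sg0_apply]
      simp only [iv_one, Loop.mul_one, Loop.one_mul]
    have heq1 : σ 1 = Sg1 hMouf := by
      apply Equiv.ext; intro p
      rw [det_v hMouf hb1 p, Sg1_apply]
      simp only [iv_one, Loop.mul_one, Loop.one_mul]
    have heq2 : σ 2 = Sg2 hMouf := by
      apply Equiv.ext; intro p
      rw [det_t hMouf hb2 p, Sg2_apply]
      simp only [iv_one, Loop.mul_one, Loop.one_mul]
    have hs0M : Sg0 hMouf ∈ (loopNet Q).MGroup := by
      rw [← heq0]
      exact Subgroup.subset_closure ⟨Loop.originLine Q 0,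
        ⟨0, by rw [e0]; exact hline_mem 1, (hσ 0).1⟩, (hσ 0).2⟩
    have hs1M : Sg1 hMouf ∈ (loopNet Q).MGroup := by
      rw [← heq1]
      exact Subgroup.subset_closure ⟨Loop.originLine Q 1,
        ⟨1, by rw [e1]; exact vline_mem 1, (hσ 1).1⟩, (hσ 1).2⟩
    -- the forward homomorphism
    have Phi_central : ∀ α : MulAut Q, Phi hMouf hs0M hs1M ha0 α ∈
        Subgroup.centralizer (Set.range (conjAutM0 Q σ hnorm)) := by
      intro α
      rw [Subgroup.mem_centralizer_iff]
      rintro r ⟨i, rfl⟩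
      apply MulEquiv.ext; intro g
      rw [MulAut.mul_apply, MulAut.mul_apply]
      apply Subtype.ext
      show (σ i)⁻¹ * (Aeq α * g.1 * (Aeq α)⁻¹) * σ i =
        Aeq α * ((σ i)⁻¹ * g.1 * σ i) * (Aeq α)⁻¹
      have hc : Commute (Aeq α) (σ i) := by
        fin_cases i
        · show Commute (Aeq α) (σ 0)
          rw [heq0]; exact Aeq_comm_Sg0 hMouf α
        · show Commute (Aeq α) (σ 1)
          rw [heq1]; exact Aeq_comm_Sg1 hMouf α
        · show Commute (Aeq α) (σ 2)
          rw [heq2]; exact Aeq_comm_Sg2 hMouf α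
      calc (σ i)⁻¹ * (Aeq α * g.1 * (Aeq α)⁻¹) * σ i
          = ((σ i)⁻¹ * Aeq α) * g.1 * ((Aeq α)⁻¹ * σ i) := by group
        _ = (Aeq α * (σ i)⁻¹) * g.1 * (σ i * (Aeq α)⁻¹) := by
            rw [← hc.inv_right.eq, hc.inv_left.eq]
        _ = Aeq α * ((σ i)⁻¹ * g.1 * σ i) * (Aeq α)⁻¹ := by group
    let F : MulAut Q →* ↥(Subgroup.centralizer (Set.range (conjAutM0 Q σ hnorm))) :=
      MonoidHom.mk' (fun α => ⟨Phi hMouf hs0M hs1M ha0 α, Phi_central α⟩)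
        (fun α β => Subtype.ext (Phi_mul hMouf hs0M hs1M ha0 α β))
    have Ttinj : ∀ b b' : Q, Tt hMouf b = Tt hMouf b' → b = b' := by
      intro b b' h
      have h2 := congrArg (fun f : Equiv.Perm (Q × Q) => (f (1, 1)).1) h
      simp only [Tt_apply] at h2
      rwa [Loop.mul_one, Loop.mul_one] at h2
    have Finj : Function.Injective F := by
      rw [injective_iff_map_eq_one]
      intro α hα
      have h1 : Phi hMouf hs0M hs1M ha0 α = 1 := congrArg Subtype.val hα
      apply MulEquiv.ext; intro q
      show α q = q
      have h2 := congrArg (fun e : MulAut ↥((loopNet Q).MZero) =>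
        ((e ⟨Tt hMouf q, Tt_mem_MZero hMouf hs0M hs1M q⟩ :
          ↥((loopNet Q).MZero)) : Equiv.Perm (Q × Q))) h1
      rw [Phi_apply_coe] at h2
      rw [Aeq_conj_Tt hMouf] at h2
      exact Ttinj _ _ h2
    have Fsurj : Function.Surjective F := by
      intro θθ
      have hθ := θθ.2
      rw [Subgroup.mem_centralizer_iff] at hθ
      set θ : MulAut ↥((loopNet Q).MZero) := θθ.1 with hθdef
      have hcm : ∀ i, ∀ g : ↥((loopNet Q).MZero),
          conjAutM0 Q σ hnorm i (θ g) = θ (conjAutM0 Q σ hnorm i g) := by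
        intro i g
        have h := hθ (conjAutM0 Q σ hnorm i) ⟨i, rfl⟩
        have h2 := DFunLike.congr_fun h g
        rwa [MulAut.mul_apply, MulAut.mul_apply] at h2
      have hcm' : ∀ i, ∀ g : ↥((loopNet Q).MZero),
          conjAutM0 Q σ hnorm i (θ⁻¹ g) = θ⁻¹ (conjAutM0 Q σ hnorm i g) := by
        intro i g
        have h := hcm i (θ⁻¹ g)
        rw [show θ (θ⁻¹ g) = g from θ.apply_symm_apply g] at h
        have h2 := congrArg (fun z => θ⁻¹ z) h
        rw [show θ⁻¹ (θ (conjAutM0 Q σ hnorm i (θ⁻¹ g))) = conjAutM0 Q σ hnorm i (θ⁻¹ g)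
          from θ.symm_apply_apply _] at h2
        exact h2.symm
      choose αf hαf using theta_Tt hMouf σ hnorm heq0 heq1 heq2 hs0M hs1M θ hcm
      choose αg hαg using theta_Tt hMouf σ hnorm heq0 heq1 heq2 hs0M hs1M θ⁻¹ hcm'
      set TT : Q → ↥((loopNet Q).MZero) :=
        fun a => ⟨Tt hMouf a, Tt_mem_MZero hMouf hs0M hs1M a⟩ with hTT
      have hθT : ∀ a, θ (TT a) = TT (αf a) := fun a => Subtype.ext (hαf a)
      have hθT' : ∀ a, θ⁻¹ (TT a) = TT (αg a) := fun a => Subtype.ext (hαg a)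
      have hgf : ∀ a, αg (αf a) = a := by
        intro a
        have h : θ⁻¹ (θ (TT a)) = TT a := θ.symm_apply_apply _
        rw [hθT, hθT'] at h
        exact Ttinj _ _ (congrArg Subtype.val h)
      have hfg : ∀ a, αf (αg a) = a := by
        intro a
        have h : θ (θ⁻¹ (TT a)) = TT a := θ.apply_symm_apply _
        rw [hθT', hθT] at h
        exact Ttinj _ _ (congrArg Subtype.val h)
      have rel : ∀ a b, TT (a * b) =
          conjAutM0 Q σ hnorm 0 (TT a) * TT b * conjAutM0 Q σ hnorm 1 (TT a) := by
        intro a b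
        apply Subtype.ext
        show Tt hMouf (a * b) =
          ((σ 0)⁻¹ * Tt hMouf a * σ 0) * Tt hMouf b * ((σ 1)⁻¹ * Tt hMouf a * σ 1)
        rw [heq0, heq1, Sg0_inv hMouf, Sg1_inv hMouf]
        exact (Tmul hMouf a b).symm
      have hmul : ∀ a b, αf (a * b) = αf a * αf b := by
        intro a b
        have h : θ (TT (a * b)) =
            θ (conjAutM0 Q σ hnorm 0 (TT a) * TT b * conjAutM0 Q σ hnorm 1 (TT a)) :=
          congrArg θ (rel a b)
        rw [hθT] at h
        rw [_root_.map_mul, _root_.map_mul, ← hcm 0, ← hcm 1, hθT, hθT,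
          ← rel (αf a) (αf b)] at h
        exact Ttinj _ _ (congrArg Subtype.val h)
      let αE : MulAut Q :=
        { toFun := αf, invFun := αg, left_inv := hgf, right_inv := hfg,
          map_mul' := hmul }
      refine ⟨αE, ?_⟩
      apply Subtype.ext
      show Phi hMouf hs0M hs1M ha0 αE = θ
      apply MulEquiv.ext; intro g
      apply Subtype.ext
      have claim : ∀ x, x ∈ G0 hMouf → ∀ hxM : x ∈ (loopNet Q).MZero,
          ((θ ⟨x, hxM⟩ : ↥((loopNet Q).MZero)) : Equiv.Perm (Q × Q)) =
            Aeq αE * x * (Aeq αE)⁻¹ := by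
        intro x hx
        induction hx using Subgroup.closure_induction with
        | mem f hf =>
          intro hxM
          rcases hf with ⟨a, rfl⟩ | ⟨a, rfl⟩ | ⟨a, rfl⟩
          · rw [Aeq_conj_Tt hMouf]
            exact hαf a
          · have e : (⟨Ha hMouf a, hxM⟩ : ↥((loopNet Q).MZero)) =
                conjAutM0 Q σ hnorm 0 (TT a) := by
              apply Subtype.ext
              show Ha hMouf a = (σ 0)⁻¹ * Tt hMouf a * σ 0
              rw [heq0, Sg0_inv hMouf]
              rfl
            rw [e, ← hcm 0, hθT]
            rw [Aeq_conj_Ha hMouf]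
            show (σ 0)⁻¹ * Tt hMouf (αf a) * σ 0 = Ha hMouf (αf a)
            rw [heq0, Sg0_inv hMouf]
            rfl
          · have e : (⟨Va hMouf a, hxM⟩ : ↥((loopNet Q).MZero)) =
                conjAutM0 Q σ hnorm 1 (TT a) := by
              apply Subtype.ext
              show Va hMouf a = (σ 1)⁻¹ * Tt hMouf a * σ 1
              rw [heq1, Sg1_inv hMouf]
              rfl
            rw [e, ← hcm 1, hθT]
            rw [Aeq_conj_Va hMouf]
            show (σ 1)⁻¹ * Tt hMouf (αf a) * σ 1 = Va hMouf (αf a)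
            rw [heq1, Sg1_inv hMouf]
            rfl
        | one =>
          intro hxM
          have e : (⟨(1 : Equiv.Perm (Q × Q)), hxM⟩ : ↥((loopNet Q).MZero)) = 1 := rfl
          rw [e, _root_.map_one]
          show (1 : Equiv.Perm (Q × Q)) = _
          group
        | mul x y hx hy ihx ihy =>
          intro hxyM
          have hxM := G0_le_MZero hMouf hs0M hs1M hx
          have hyM := G0_le_MZero hMouf hs0M hs1M hy
          have e : (⟨x * y, hxyM⟩ : ↥((loopNet Q).MZero)) = ⟨x, hxM⟩ * ⟨y, hyM⟩ := rfl
          rw [e, _root_.map_mul]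
          show ((θ ⟨x, hxM⟩ : ↥((loopNet Q).MZero)) : Equiv.Perm (Q × Q)) *
            ((θ ⟨y, hyM⟩ : ↥((loopNet Q).MZero)) : Equiv.Perm (Q × Q)) = _
          rw [ihx hxM, ihy hyM]
          group
        | inv x hx ihx =>
          intro hxM'
          have hxM := G0_le_MZero hMouf hs0M hs1M hx
          have e : (⟨x⁻¹, hxM'⟩ : ↥((loopNet Q).MZero)) = (⟨x, hxM⟩)⁻¹ := rfl
          rw [e, _root_.map_inv]
          show (((θ ⟨x, hxM⟩ : ↥((loopNet Q).MZero)) : Equiv.Perm (Q × Q)))⁻¹ = _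
          rw [ihx hxM]
          group
      have hgm : g.1 ∈ G0 hMouf := MZero_le_G0 hMouf ha0 g.2
      have := claim g.1 hgm g.2
      exact this.symm
    exact ⟨MulEquiv.ofBijective F ⟨Finj, Fsurj⟩⟩
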